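/- arXiv:1104.2911 — 5 statements merged into one kernel-verified Lean document; each statement's English description precedes it below -/
import Mathlib

section
/- Let A be a compact infinite metric space and let μ be an upper α-regular measure on A with μ(A) > 0, for some α > 0. Let w be an SLP weight on A such that sup_{x ∈ A} ‖w(·,x)‖_{L^{p₀}(μ)} < ∞ for some 1 < p₀ ≤ ∞. Suppose 1 < p ≤ p₀ and s > α(1 − 1/p). Then there exists a constant C₁ > 0, independent of N, such that for every N ≥ 2, every N-point (s,w)-energy minimizing configuration ω*_N on A satisfies δ(ω*_N) ≥ C₁ · N^{−(1/α + 1/(s p))}. -/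
open Metric MeasureTheory Filter
open scoped ENNReal NNReal

noncomputable section

variable {A : Type*} [MetricSpace A]

/-- The separation distance `δ(ω_N)` of a configuration of `N` points. -/
def sepDist {N : ℕ} (x : Fin N → A) : ℝ :=
  sInf {d : ℝ | ∃ i j : Fin N, i ≠ j ∧ d = dist (x i) (x j)}

/-- The mesh norm (covering radius) `ρ(ω_N, K)` of a configuration with respect to `K`. -/
def meshNorm {N : ℕ} (x : Fin N → A) (K : Set A) : ℝ :=
  sSup {d : ℝ | ∃ y ∈ K, d = ⨅ i : Fin N, dist y (x i)}

/-- The weighted Riesz `(s,w)`-energy of a configuration. -/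
def rieszEnergy {N : ℕ} (s : ℝ) (w : A → A → ℝ) (x : Fin N → A) : ℝ :=
  ∑ i : Fin N, ∑ j : Fin N, if i = j then 0 else w (x i) (x j) / dist (x i) (x j) ^ s

/-- `x` is an `N`-point `(s,w)`-energy minimizing configuration on `K`. -/
def IsEnergyMinimizer {N : ℕ} (s : ℝ) (w : A → A → ℝ) (K : Set A) (x : Fin N → A) : Prop :=
  Function.Injective x ∧ (∀ i, x i ∈ K) ∧
    ∀ y : Fin N → A, Function.Injective y → (∀ i, y i ∈ K) →
      rieszEnergy s w x ≤ rieszEnergy s w y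

/-- The `N`-point best-packing distance `δ_N(K)`. -/
def bestPackingDist (K : Set A) (N : ℕ) : ℝ :=
  sSup {d : ℝ | ∃ x : Fin N → A, Function.Injective x ∧ (∀ i, x i ∈ K) ∧ d = sepDist x}

/-- The `N`-point mesh norm `ρ_N(K)`. -/
def meshNormN (K : Set A) (N : ℕ) : ℝ :=
  sInf {d : ℝ | ∃ x : Fin N → A, Function.Injective x ∧ (∀ i, x i ∈ K) ∧ d = meshNorm x K}

/-- The minimal `N`-point `(s,w)`-energy `𝓔_s^w(N,K)`. -/
def minEnergy (s : ℝ) (w : A → A → ℝ) (K : Set A) (N : ℕ) : ℝ :=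
  sInf {E : ℝ | ∃ x : Fin N → A, Function.Injective x ∧ (∀ i, x i ∈ K) ∧ E = rieszEnergy s w x}

/-- `μ` is upper `α`-regular with constant `C₀`. -/
def IsUpperRegular [MeasurableSpace A] (μ : Measure A) (α C₀ : ℝ) : Prop :=
  ∀ (x : A) (r : ℝ), 0 < r → r ≤ diam (Set.univ : Set A) →
    μ (closedBall x r) ≤ ENNReal.ofReal (C₀ * r ^ α)

/-- `μ` is lower `α`-regular with constant `c₀`. -/
def IsLowerRegular [MeasurableSpace A] (μ : Measure A) (α c₀ : ℝ) : Prop :=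
  ∀ (x : A) (r : ℝ), 0 < r → r ≤ diam (Set.univ : Set A) →
    ENNReal.ofReal (c₀⁻¹ * r ^ α) ≤ μ (closedBall x r)

/-- `w` is an SLP weight on `K`: symmetric, lower semi-continuous on `K × K`,
nonnegative, and positive on the diagonal. -/
def IsSLPWeight (w : A → A → ℝ) (K : Set A) : Prop :=
  (∀ x ∈ K, ∀ y ∈ K, 0 ≤ w x y) ∧
  (∀ x ∈ K, ∀ y ∈ K, w x y = w y x) ∧
  LowerSemicontinuousOn (fun p : A × A => w p.1 p.2) (K ×ˢ K) ∧
  (∀ x ∈ K, 0 < w x x)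

/-! ### Auxiliary lemmas for the proof of `stmt_0` -/

/-- Uniform positivity of an lsc weight near the diagonal on a compact space. -/
lemma aux_diag_lower_bound {A : Type*} [MetricSpace A] [CompactSpace A] [Nonempty A]
    (w : A → A → ℝ) (hlsc : LowerSemicontinuous (fun p : A × A => w p.1 p.2))
    (hpos : ∀ x : A, 0 < w x x) :
    ∃ ε > (0:ℝ), ∃ c > (0:ℝ), ∀ x y : A, dist x y ≤ ε → c ≤ w x y := by
  have key : ∀ x : A, ∃ δ > (0:ℝ), ∀ u v : A, dist u x < δ → dist v x < δ →
      w x x / 2 < w u v := by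
    intro x
    have h := hlsc (x, x) (w x x / 2) (by linarith [hpos x])
    rw [Metric.eventually_nhds_iff] at h
    obtain ⟨δ, hδ, hh⟩ := h
    exact ⟨δ, hδ, fun u v hu hv => hh (show dist (u,v) (x,x) < δ from
      max_lt hu hv)⟩
  choose δ hδpos hδ using key
  obtain ⟨t, ht⟩ := isCompact_univ.elim_finite_subcover
    (fun x : A => ball x (δ x / 2))
    (fun x => isOpen_ball)
    (fun x _ => Set.mem_iUnion.2 ⟨x, mem_ball_self (by linarith [hδpos x])⟩)
  have htne : t.Nonempty := by
    rcases Finset.eq_empty_or_nonempty t with h | h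
    · exfalso
      obtain ⟨x⟩ := (inferInstance : Nonempty A)
      have := ht (Set.mem_univ x)
      simp [h] at this
    · exact h
  set ε : ℝ := (t.inf' htne fun x => δ x / 2)
  set c : ℝ := (t.inf' htne fun x => w x x / 2)
  refine ⟨ε, ?_, c, ?_, ?_⟩
  · exact (Finset.lt_inf'_iff htne).2 fun x _ => by linarith [hδpos x]
  · exact (Finset.lt_inf'_iff htne).2 fun x _ => by linarith [hpos x]
  · intro x y hxy
    have := ht (Set.mem_univ x)
    rw [Set.mem_iUnion₂] at this
    obtain ⟨z, hz, hxz⟩ := this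
    rw [mem_ball] at hxz
    have h1 : dist x z < δ z := by linarith [hδpos z]
    have h2 : dist y z < δ z := by
      have hε : ε ≤ δ z / 2 := Finset.inf'_le _ hz
      calc dist y z ≤ dist y x + dist x z := dist_triangle _ _ _
        _ < ε + δ z / 2 := by rw [dist_comm]; linarith
        _ ≤ δ z := by linarith
    have := hδ z x y h1 h2
    have hc : c ≤ w z z / 2 := Finset.inf'_le _ hz
    linarith

/-- Geometric-shell bound for the tail of a Riesz integral against an upper-regular measure. -/
lemma aux_tail_bound {A : Type*} [MetricSpace A] [MeasurableSpace A]
    (μ : Measure A) (α C₀ β : ℝ) (hα : 0 < α) (hC₀ : 0 < C₀) (hβ : α < β)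
    (hreg : ∀ (x : A) (t : ℝ), 0 < t → μ (closedBall x t) ≤ ENNReal.ofReal (C₀ * t ^ α)) :
    ∃ K > (0:ℝ), ∀ (z : A) (r : ℝ), 0 < r →
      ∫⁻ y in (closedBall z r)ᶜ, ENNReal.ofReal (dist y z ^ (-β)) ∂μ
        ≤ ENNReal.ofReal (K * r ^ (α - β)) := by
  set θ : ℝ := (2:ℝ) ^ (α - β) with hθdef
  have hθpos : 0 < θ := Real.rpow_pos_of_pos two_pos _
  have hθlt : θ < 1 := Real.rpow_lt_one_of_one_lt_of_neg one_lt_two (by linarith)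
  refine ⟨C₀ * 2 ^ α / (1 - θ), div_pos (by positivity) (by linarith), fun z r hr => ?_⟩
  set S : ℕ → Set A := fun k => closedBall z (2 ^ (k+1) * r) \ closedBall z (2 ^ k * r)
    with hS
  have hcover : (closedBall z r)ᶜ ⊆ ⋃ k, S k := by
    intro y hy
    rw [Set.mem_compl_iff, mem_closedBall, not_le] at hy
    obtain ⟨n, hn⟩ := pow_unbounded_of_one_lt (dist y z / r) one_lt_two
    have hP : ∃ n, dist y z ≤ 2 ^ n * r := ⟨n, by
      rw [div_lt_iff₀ hr] at hn; linarith⟩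
    set n₀ := Nat.find hP with hn₀
    have hfind : dist y z ≤ 2 ^ n₀ * r := Nat.find_spec hP
    have hn₀pos : n₀ ≠ 0 := by
      intro h
      rw [h] at hfind; simp at hfind; linarith
    obtain ⟨k, hk⟩ := Nat.exists_eq_succ_of_ne_zero hn₀pos
    have hnot : ¬ dist y z ≤ 2 ^ k * r := Nat.find_min hP (by omega)
    refine Set.mem_iUnion.2 ⟨k, ?_, ?_⟩
    · rw [mem_closedBall]; rw [hk] at hfind; exact hfind
    · rw [mem_closedBall]; exact hnot
  calc ∫⁻ y in (closedBall z r)ᶜ, ENNReal.ofReal (dist y z ^ (-β)) ∂μ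
      ≤ ∫⁻ y in ⋃ k, S k, ENNReal.ofReal (dist y z ^ (-β)) ∂μ :=
        lintegral_mono_set hcover
    _ ≤ ∑' k, ∫⁻ y in S k, ENNReal.ofReal (dist y z ^ (-β)) ∂μ :=
        lintegral_iUnion_le _ _
    _ ≤ ∑' k, ENNReal.ofReal ((C₀ * 2 ^ α * r ^ (α - β)) * θ ^ k) := by
        refine ENNReal.tsum_le_tsum fun k => ?_
        have h2k : (0:ℝ) < 2 ^ k * r := by positivity
        have hstep : ∫⁻ y in S k, ENNReal.ofReal (dist y z ^ (-β)) ∂μ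
            ≤ ENNReal.ofReal ((2 ^ k * r) ^ (-β)) * μ (S k) := by
          rw [← setLIntegral_const]
          refine setLIntegral_mono measurable_const fun y hy => ?_
          refine ENNReal.ofReal_le_ofReal ?_
          have : 2 ^ k * r < dist y z := by
            have := hy.2; rw [mem_closedBall, not_le] at this; exact this
          exact Real.rpow_le_rpow_of_nonpos h2k this.le (by linarith)
        refine hstep.trans ?_
        have hμS : μ (S k) ≤ ENNReal.ofReal (C₀ * (2 ^ (k+1) * r) ^ α) :=
          (measure_mono Set.diff_subset).trans (hreg z _ (by positivity))
        calc ENNReal.ofReal ((2 ^ k * r) ^ (-β)) * μ (S k)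
            ≤ ENNReal.ofReal ((2 ^ k * r) ^ (-β)) * ENNReal.ofReal (C₀ * (2 ^ (k+1) * r) ^ α) :=
              mul_le_mul_right hμS _
          _ = ENNReal.ofReal ((2 ^ k * r) ^ (-β) * (C₀ * (2 ^ (k+1) * r) ^ α)) :=
              (ENNReal.ofReal_mul (by positivity)).symm
          _ = ENNReal.ofReal ((C₀ * 2 ^ α * r ^ (α - β)) * θ ^ k) := by
              congr 1
              have e1 : ((2:ℝ) ^ k * r) ^ (-β) = ((2:ℝ) ^ k) ^ (-β) * r ^ (-β) :=
                Real.mul_rpow (by positivity) hr.le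
              have e2 : ((2:ℝ) ^ (k+1) * r) ^ α = ((2:ℝ) ^ k) ^ α * 2 ^ α * r ^ α := by
                rw [Real.mul_rpow (by positivity) hr.le, pow_succ,
                  Real.mul_rpow (by positivity) (by norm_num)]
              have e3 : θ ^ k = ((2:ℝ) ^ k) ^ α * ((2:ℝ) ^ k) ^ (-β) := by
                rw [hθdef, ← Real.rpow_natCast ((2:ℝ) ^ (α - β)) k,
                  ← Real.rpow_natCast (2:ℝ) k, ← Real.rpow_mul (by norm_num),
                  ← Real.rpow_mul (by norm_num), ← Real.rpow_mul (by norm_num),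
                  ← Real.rpow_add two_pos]
                ring_nf
              have e4 : r ^ (α - β) = r ^ α * r ^ (-β) := by
                rw [← Real.rpow_add hr]; ring_nf
              rw [e1, e2, e3, e4]; ring
    _ = ∑' k, ENNReal.ofReal (C₀ * 2 ^ α * r ^ (α - β)) * ENNReal.ofReal θ ^ k :=
        tsum_congr fun k => by
          rw [ENNReal.ofReal_mul (by positivity), ENNReal.ofReal_pow hθpos.le]
    _ = ENNReal.ofReal (C₀ * 2 ^ α * r ^ (α - β)) * ∑' k, ENNReal.ofReal θ ^ k :=
        ENNReal.tsum_mul_left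
    _ = ENNReal.ofReal (C₀ * 2 ^ α * r ^ (α - β)) * (1 - ENNReal.ofReal θ)⁻¹ := by
        rw [ENNReal.tsum_geometric]
    _ = ENNReal.ofReal (C₀ * 2 ^ α / (1 - θ) * r ^ (α - β)) := by
        rw [← ENNReal.ofReal_one, ← ENNReal.ofReal_sub _ hθpos.le,
          ← ENNReal.ofReal_inv_of_pos (by linarith),
          ← ENNReal.ofReal_mul (by positivity)]
        congr 1
        ring

lemma aux_energy_decomp {A : Type*} [MetricSpace A] {N : ℕ} (s : ℝ) (w : A → A → ℝ)
    (hsym : ∀ a b : A, w a b = w b a) (x : Fin N → A) (i : Fin N) :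
    rieszEnergy s w x
      = 2 * (∑ j ∈ Finset.univ.erase i, w (x i) (x j) / dist (x i) (x j) ^ s)
        + ∑ a ∈ Finset.univ.erase i, ∑ b ∈ Finset.univ.erase i,
            (if a = b then 0 else w (x a) (x b) / dist (x a) (x b) ^ s) := by
  classical
  set t : Fin N → Fin N → ℝ := fun a b => w (x a) (x b) / dist (x a) (x b) ^ s with ht
  have htsym : ∀ a b, t a b = t b a := by
    intro a b; simp only [ht, hsym (x a) (x b), dist_comm (x a) (x b)]
  have hrow : ∀ a : Fin N, (∑ b : Fin N, if a = b then 0 else t a b)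
      = (if a = i then 0 else t a i) + ∑ b ∈ Finset.univ.erase i, (if a = b then 0 else t a b) := by
    intro a
    rw [← Finset.add_sum_erase _ _ (Finset.mem_univ i)]
  have hmain : rieszEnergy s w x = ∑ a : Fin N, ∑ b : Fin N, if a = b then 0 else t a b := rfl
  rw [hmain, ← Finset.add_sum_erase _ _ (Finset.mem_univ i)]
  have hrow_i : (∑ b : Fin N, if i = b then 0 else t i b)
      = ∑ b ∈ Finset.univ.erase i, t i b := by
    rw [hrow i, if_pos rfl, zero_add]
    refine Finset.sum_congr rfl fun b hb => ?_
    rw [if_neg]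
    exact fun h => (Finset.mem_erase.1 hb).1 h.symm
  rw [hrow_i]
  have hrest : (∑ a ∈ Finset.univ.erase i, ∑ b : Fin N, if a = b then 0 else t a b)
      = (∑ a ∈ Finset.univ.erase i, t i a)
        + ∑ a ∈ Finset.univ.erase i, ∑ b ∈ Finset.univ.erase i, (if a = b then 0 else t a b) := by
    rw [← Finset.sum_add_distrib]
    refine Finset.sum_congr rfl fun a ha => ?_
    rw [hrow a, if_neg (Finset.mem_erase.1 ha).1, htsym a i]
  rw [hrest]
  ring

lemma aux_minimizer_pointwise {A : Type*} [MetricSpace A] {N : ℕ} (s : ℝ) (w : A → A → ℝ)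
    (hsym : ∀ a b : A, w a b = w b a) (x : Fin N → A)
    (hx : IsEnergyMinimizer s w Set.univ x) (i : Fin N) (y : A)
    (hy : ∀ j, j ≠ i → y ≠ x j) :
    (∑ j ∈ Finset.univ.erase i, w (x i) (x j) / dist (x i) (x j) ^ s)
      ≤ ∑ j ∈ Finset.univ.erase i, w y (x j) / dist y (x j) ^ s := by
  classical
  set z : Fin N → A := Function.update x i y with hz
  have hzi : z i = y := Function.update_self i y x
  have hzj : ∀ j, j ≠ i → z j = x j := fun j hj => Function.update_of_ne hj y x
  have hinj : Function.Injective z := by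
    intro a b hab
    by_cases ha : a = i <;> by_cases hb : b = i
    · rw [ha, hb]
    · exfalso; rw [ha, hzi, hzj b hb] at hab; exact hy b hb hab
    · exfalso; rw [hb, hzi, hzj a ha] at hab; exact hy a ha hab.symm
    · rw [hzj a ha, hzj b hb] at hab; exact hx.1 hab
  have hE := hx.2.2 z hinj (fun _ => Set.mem_univ _)
  rw [aux_energy_decomp s w hsym x i, aux_energy_decomp s w hsym z i] at hE
  have h1 : (∑ j ∈ Finset.univ.erase i, w (z i) (z j) / dist (z i) (z j) ^ s)
      = ∑ j ∈ Finset.univ.erase i, w y (x j) / dist y (x j) ^ s := by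
    refine Finset.sum_congr rfl fun j hj => ?_
    rw [hzi, hzj j (Finset.mem_erase.1 hj).1]
  have h2 : (∑ a ∈ Finset.univ.erase i, ∑ b ∈ Finset.univ.erase i,
        (if a = b then 0 else w (z a) (z b) / dist (z a) (z b) ^ s))
      = ∑ a ∈ Finset.univ.erase i, ∑ b ∈ Finset.univ.erase i,
        (if a = b then 0 else w (x a) (x b) / dist (x a) (x b) ^ s) := by
    refine Finset.sum_congr rfl fun a ha => Finset.sum_congr rfl fun b hb => ?_
    rw [hzj a (Finset.mem_erase.1 ha).1, hzj b (Finset.mem_erase.1 hb).1]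
  rw [h1, h2] at hE
  linarith

lemma aux_sepDist_attained {A : Type*} [MetricSpace A] {N : ℕ} (hN : 2 ≤ N) (x : Fin N → A) :
    ∃ i j : Fin N, i ≠ j ∧ sepDist x = dist (x i) (x j)
      ∧ ∀ a b : Fin N, a ≠ b → sepDist x ≤ dist (x a) (x b) := by
  classical
  set D := {d : ℝ | ∃ i j : Fin N, i ≠ j ∧ d = dist (x i) (x j)} with hD
  have hfin : D.Finite := by
    refine Set.Finite.subset (Set.finite_range
      (fun p : Fin N × Fin N => dist (x p.1) (x p.2))) ?_
    rintro d ⟨i, j, _, rfl⟩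
    exact ⟨(i, j), rfl⟩
  have hne : D.Nonempty := by
    refine ⟨dist (x ⟨0, by omega⟩) (x ⟨1, by omega⟩), ⟨0, by omega⟩, ⟨1, by omega⟩, ?_, rfl⟩
    intro h
    have := congrArg Fin.val h
    simp at this
  have hmem : sInf D ∈ D := hne.csInf_mem hfin
  obtain ⟨i, j, hij, hdist⟩ := hmem
  exact ⟨i, j, hij, hdist, fun a b hab => csInf_le hfin.bddBelow ⟨a, b, hab, rfl⟩⟩

lemma aux_holder_tail {A : Type*} [MetricSpace A] [MeasurableSpace A] [BorelSpace A]
    (μ : Measure A) (w : A → A → ℝ)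
    (hwm : ∀ z : A, Measurable (fun y => w y z)) (hwnn : ∀ y z : A, 0 ≤ w y z)
    (s : ℝ) (hs : 0 < s) (p₀ p : ℝ≥0∞) (hp : 1 < p) (hpp₀ : p ≤ p₀)
    (M : ℝ) (hM : ∀ z : A, eLpNorm (fun y => w y z) p₀ μ ≤ ENNReal.ofReal M)
    (hμfin : μ Set.univ ≠ ∞) (q : ℝ)
    (hcase : (p = ∞ ∧ q = 1) ∨ (p ≠ ∞ ∧ p.toReal.HolderConjugate q)) :
    ∃ W : ℝ≥0∞, W ≠ ∞ ∧ ∀ (z : A) (E : Set A),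
      ∫⁻ y in E, ENNReal.ofReal (w y z / dist y z ^ s) ∂μ
        ≤ W * (∫⁻ y in E, ENNReal.ofReal (dist y z ^ (-(s*q))) ∂μ) ^ (1/q) := by
  have hfact : ∀ (z y : A), ENNReal.ofReal (w y z / dist y z ^ s)
      = ENNReal.ofReal (w y z) * ENNReal.ofReal (dist y z ^ (-s)) := by
    intro z y
    rcases eq_or_lt_of_le (dist_nonneg : (0:ℝ) ≤ dist y z) with hd | hd
    · rw [← hd, Real.zero_rpow hs.ne', Real.zero_rpow (by intro h; linarith : -s ≠ 0)]
      simp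
    · rw [Real.rpow_neg hd.le, ← ENNReal.ofReal_mul (hwnn y z), ← div_eq_mul_inv]
  have hgq : ∀ (z y : A), 0 ≤ q → ENNReal.ofReal (dist y z ^ (-s)) ^ q
      = ENNReal.ofReal (dist y z ^ (-(s*q))) := by
    intro z y hq0
    rw [ENNReal.ofReal_rpow_of_nonneg (Real.rpow_nonneg dist_nonneg _) hq0,
      ← Real.rpow_mul dist_nonneg]
    ring_nf
  have hgm : ∀ z : A, Measurable (fun y => ENNReal.ofReal (dist y z ^ (-s))) := by
    intro z; fun_prop
  rcases hcase with ⟨hptop, hq⟩ | ⟨hptop, hconj⟩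
  · subst hq
    refine ⟨ENNReal.ofReal M, ENNReal.ofReal_ne_top, fun z E => ?_⟩
    have hp₀top : p₀ = ∞ := top_le_iff.1 (hptop ▸ hpp₀)
    have hess : ∀ᵐ y ∂μ, ENNReal.ofReal (w y z) ≤ ENNReal.ofReal M := by
      filter_upwards [enorm_ae_le_eLpNormEssSup (fun y => w y z) μ] with y hy
      calc ENNReal.ofReal (w y z) ≤ (‖w y z‖₊ : ℝ≥0∞) := Real.ofReal_le_enorm _
        _ ≤ eLpNormEssSup (fun y => w y z) μ := hy
        _ ≤ ENNReal.ofReal M := by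
            rw [← eLpNorm_exponent_top, ← hp₀top]; exact hM z
    calc ∫⁻ y in E, ENNReal.ofReal (w y z / dist y z ^ s) ∂μ
        ≤ ∫⁻ y in E, ENNReal.ofReal M * ENNReal.ofReal (dist y z ^ (-s)) ∂μ := by
          refine lintegral_mono_ae ?_
          filter_upwards [ae_restrict_of_ae hess] with y hy
          rw [hfact z y]
          exact mul_le_mul_left hy _
      _ = ENNReal.ofReal M * ∫⁻ y in E, ENNReal.ofReal (dist y z ^ (-s)) ∂μ :=
          lintegral_const_mul' _ _ ENNReal.ofReal_ne_top
      _ = ENNReal.ofReal M * (∫⁻ y in E, ENNReal.ofReal (dist y z ^ (-(s*1))) ∂μ) ^ (1/(1:ℝ)) := by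
          norm_num
  · set t : ℝ := p.toReal with htdef
    have ht1 : 1 < t := by
      rw [htdef, ← ENNReal.toReal_one]
      exact (ENNReal.toReal_lt_toReal (by simp) hptop).2 hp
    have hexp : 0 ≤ 1/t - 1/p₀.toReal := by
      rcases eq_or_ne p₀ ∞ with h | h
      · rw [h]; simp; positivity
      · have htle : t ≤ p₀.toReal := (ENNReal.toReal_le_toReal hptop h).2 hpp₀
        have h1 : 0 < t := by linarith
        have h2 : 0 < p₀.toReal := by linarith
        rw [sub_nonneg]
        exact one_div_le_one_div_of_le h1 htle
    set W : ℝ≥0∞ := ENNReal.ofReal M * μ Set.univ ^ (1/t - 1/p₀.toReal) with hW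
    have hWne : W ≠ ∞ :=
      ENNReal.mul_ne_top ENNReal.ofReal_ne_top (ENNReal.rpow_ne_top_of_nonneg hexp hμfin)
    refine ⟨W, hWne, fun z E => ?_⟩
    have hfm : Measurable (fun y => ENNReal.ofReal (w y z)) := (hwm z).ennreal_ofReal
    have hfirst : (∫⁻ y, ENNReal.ofReal (w y z) ^ t ∂(μ.restrict E)) ^ (1/t) ≤ W := by
      calc (∫⁻ y, ENNReal.ofReal (w y z) ^ t ∂(μ.restrict E)) ^ (1/t)
          ≤ (∫⁻ y, ENNReal.ofReal (w y z) ^ t ∂μ) ^ (1/t) :=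
            ENNReal.rpow_le_rpow (setLIntegral_le_lintegral _ _) (by positivity)
        _ ≤ (∫⁻ y, (‖w y z‖₊ : ℝ≥0∞) ^ t ∂μ) ^ (1/t) := by
            refine ENNReal.rpow_le_rpow (lintegral_mono fun y => ?_) (by positivity)
            exact ENNReal.rpow_le_rpow (Real.ofReal_le_enorm _) (by linarith)
        _ = eLpNorm (fun y => w y z) p μ :=
            (eLpNorm_eq_lintegral_rpow_enorm_toReal (μ := μ) (f := fun y => w y z) (by simpa using (zero_lt_one.trans hp).ne')
              hptop).symm
        _ ≤ eLpNorm (fun y => w y z) p₀ μ * μ Set.univ ^ (1/t - 1/p₀.toReal) :=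
            eLpNorm_le_eLpNorm_mul_rpow_measure_univ hpp₀ (hwm z).aestronglyMeasurable
        _ ≤ W := mul_le_mul_left (hM z) _
    calc ∫⁻ y in E, ENNReal.ofReal (w y z / dist y z ^ s) ∂μ
        = ∫⁻ y in E, ((fun y => ENNReal.ofReal (w y z)) * fun y => ENNReal.ofReal (dist y z ^ (-s))) y ∂μ := by
          refine lintegral_congr fun y => ?_
          simp only [Pi.mul_apply]
          exact hfact z y
      _ ≤ (∫⁻ y, ENNReal.ofReal (w y z) ^ t ∂(μ.restrict E)) ^ (1/t)
            * (∫⁻ y, ENNReal.ofReal (dist y z ^ (-s)) ^ q ∂(μ.restrict E)) ^ (1/q) :=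
          ENNReal.lintegral_mul_le_Lp_mul_Lq (μ.restrict E) hconj
            hfm.aemeasurable (hgm z).aemeasurable
      _ ≤ W * (∫⁻ y in E, ENNReal.ofReal (dist y z ^ (-(s*q))) ∂μ) ^ (1/q) := by
          refine mul_le_mul hfirst (le_of_eq ?_) zero_le zero_le
          congr 1
          exact lintegral_congr fun y => hgq z y (by linarith [hconj.symm.lt.le])

set_option maxHeartbeats 1600000 in
/-- Theorem `separation`: separation of weighted minimal energy
configurations on an upper `α`-regular compact metric space. -/
theorem stmt_0 {A : Type*} [MetricSpace A] [CompactSpace A] [Infinite A]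
    [MeasurableSpace A] [BorelSpace A]
    (α : ℝ) (hα : 0 < α) (μ : Measure A) (C₀ : ℝ)
    (hreg : IsUpperRegular μ α C₀) (hμpos : 0 < μ Set.univ)
    (w : A → A → ℝ) (hw : IsSLPWeight w Set.univ)
    (p₀ p : ℝ≥0∞) (hp₀ : 1 < p₀)
    (hwLp : ∃ M : ℝ, ∀ x : A, eLpNorm (fun y => w y x) p₀ μ ≤ ENNReal.ofReal M)
    (hp : 1 < p) (hpp₀ : p ≤ p₀)
    (s : ℝ) (hs : s > α * (1 - 1 / p.toReal)) :
    ∃ C₁ > 0, ∀ N : ℕ, 2 ≤ N → ∀ x : Fin N → A,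
      IsEnergyMinimizer s w Set.univ x →
      sepDist x ≥ C₁ * (N : ℝ) ^ (-(1 / α + 1 / (s * p.toReal))) := by
  classical
  obtain ⟨M, hM⟩ := hwLp
  -- weight facts
  have hwnn : ∀ y z : A, 0 ≤ w y z := fun y z => hw.1 y trivial z trivial
  have hwsym : ∀ a b : A, w a b = w b a := fun a b => hw.2.1 a trivial b trivial
  have hwlsc : LowerSemicontinuous (fun pr : A × A => w pr.1 pr.2) := by
    have h := hw.2.2.1
    rw [Set.univ_prod_univ] at h
    exact lowerSemicontinuousOn_univ_iff.1 h
  have hwdiag : ∀ x : A, 0 < w x x := fun x => hw.2.2.2 x trivial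
  have hwm : ∀ z : A, Measurable (fun y => w y z) := fun z =>
    (LowerSemicontinuous.comp hwlsc (continuous_id.prodMk continuous_const)).measurable
  -- space and measure facts
  obtain ⟨a₀, b₀, hab⟩ := exists_pair_ne A
  have hΔ : 0 < diam (Set.univ : Set A) :=
    lt_of_lt_of_le (dist_pos.2 hab)
      (dist_le_diam_of_mem isCompact_univ.isBounded trivial trivial)
  have hμle : μ Set.univ ≤ ENNReal.ofReal (C₀ * diam (Set.univ : Set A) ^ α) := by
    have hsub : (Set.univ : Set A) ⊆ closedBall a₀ (diam Set.univ) := fun y _ =>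
      mem_closedBall.2 (dist_le_diam_of_mem isCompact_univ.isBounded trivial trivial)
    exact (measure_mono hsub).trans (hreg a₀ _ hΔ le_rfl)
  have hμfin : μ Set.univ ≠ ∞ := (lt_of_le_of_lt hμle ENNReal.ofReal_lt_top).ne
  have hC₀ : 0 < C₀ := by
    have h1 : 0 < C₀ * diam (Set.univ : Set A) ^ α :=
      ENNReal.ofReal_pos.1 (lt_of_lt_of_le hμpos hμle)
    have h2 : (0:ℝ) < diam (Set.univ : Set A) ^ α := Real.rpow_pos_of_pos hΔ _
    nlinarith
  have hregall : ∀ (z : A) (t : ℝ), 0 < t →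
      μ (closedBall z t) ≤ ENNReal.ofReal (C₀ * t ^ α) := by
    intro z t ht
    rcases le_or_gt t (diam (Set.univ : Set A)) with h | h
    · exact hreg z t ht h
    · refine le_trans (le_trans (measure_mono (Set.subset_univ _)) hμle)
        (ENNReal.ofReal_le_ofReal ?_)
      have := Real.rpow_le_rpow hΔ.le h.le hα.le
      nlinarith
  -- conjugate exponent setup
  obtain ⟨q, hq1, hcase, hβ, hqt⟩ : ∃ q : ℝ, 1 ≤ q ∧
      ((p = ∞ ∧ q = 1) ∨ (p ≠ ∞ ∧ p.toReal.HolderConjugate q)) ∧ α < s * q ∧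
      1 - 1/q = 1/p.toReal := by
    rcases eq_or_ne p ∞ with h | h
    · refine ⟨1, le_rfl, Or.inl ⟨h, rfl⟩, ?_, by rw [h]; simp⟩
      rw [h] at hs
      simpa using hs
    · set t := p.toReal with htdef
      have ht1 : 1 < t := by
        rw [htdef, ← ENNReal.toReal_one]
        exact (ENNReal.toReal_lt_toReal (by simp) h).2 hp
      have ht0 : 0 < t - 1 := by linarith
      refine ⟨t/(t-1), ?_, Or.inr ⟨h, Real.holderConjugate_iff.2 ⟨ht1, by field_simp; ring⟩⟩, ?_, by field_simp; ring⟩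
      · rw [le_div_iff₀ ht0]; linarith
      · have h1 : α * (1 - 1/t) < s := hs
        have h4 : (0:ℝ) < t := by linarith
        rw [show s * (t/(t-1)) = s*t/(t-1) by ring, lt_div_iff₀ ht0]
        have h5 : α * (1 - 1/t) * t < s * t := by nlinarith
        have h6 : α * (1 - 1/t) * t = α * (t - 1) := by field_simp
        linarith
  have hq0 : 0 < q := lt_of_lt_of_le one_pos hq1
  have hs0 : 0 < s := by nlinarith
  -- main auxiliary objects
  obtain ⟨ε, hε, cw, hcw, hdiag⟩ := aux_diag_lower_bound w hwlsc hwdiag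
  obtain ⟨K, hK, htail⟩ := aux_tail_bound μ α C₀ (s*q) hα hC₀ hβ hregall
  obtain ⟨W, hWne, hhold⟩ := aux_holder_tail μ w hwm hwnn s hs0 p₀ p hp hpp₀ M hM hμfin q hcase
  set mR := (μ Set.univ).toReal with hmRdef
  have hmR : 0 < mR := ENNReal.toReal_pos hμpos.ne' hμfin
  set c : ℝ := (mR / (2 * C₀)) ^ (1/α) with hcdef
  have hc : 0 < c := Real.rpow_pos_of_pos (by positivity) _
  have hckey : C₀ * c ^ α = mR / 2 := by
    rw [hcdef, ← Real.rpow_mul (by positivity), one_div, inv_mul_cancel₀ hα.ne',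
      Real.rpow_one]
    field_simp
  have hWR : (0:ℝ) ≤ W.toReal := ENNReal.toReal_nonneg
  set DEN : ℝ := (W.toReal + 1) * K ^ (1/q) * c ^ ((α - s*q) * (1/q)) with hDEN
  have hDENpos : 0 < DEN := by positivity
  set B : ℝ := (cw * (mR/2) / DEN) ^ (1/s) with hB
  have hBpos : 0 < B := Real.rpow_pos_of_pos (by positivity) _
  refine ⟨min ε B, lt_min hε hBpos, ?_⟩
  intro N hN x hxmin
  set γ : ℝ := 1/α + 1/(s * p.toReal) with hγdef
  have hγrw : 1/(s * p.toReal) = (1 - 1/q)/s := by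
    rw [hqt, div_div, mul_comm]
  have hγ0 : 0 ≤ γ := by
    rw [hγdef, hγrw]
    have hq1' : 1/q ≤ 1 := by rw [div_le_one hq0]; exact hq1
    have := hα
    have h1 : (0:ℝ) ≤ 1/α := by positivity
    have h2 : (0:ℝ) ≤ (1 - 1/q)/s := div_nonneg (by linarith) hs0.le
    linarith
  have hNpos : (0:ℝ) < N := by
    have : (0:ℕ) < N := by omega
    exact_mod_cast this
  have hN1 : (1:ℝ) ≤ N := by
    have : (1:ℕ) ≤ N := by omega
    exact_mod_cast this
  have hpow1 : (N:ℝ) ^ (-γ) ≤ 1 :=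
    Real.rpow_le_one_of_one_le_of_nonpos hN1 (neg_nonpos.2 hγ0)
  have hpow0 : (0:ℝ) ≤ (N:ℝ) ^ (-γ) := Real.rpow_nonneg hNpos.le _
  show sepDist x ≥ min ε B * (N:ℝ) ^ (-γ)
  obtain ⟨i, j, hij, hδeq, hδle⟩ := aux_sepDist_attained hN x
  have hδpos : 0 < sepDist x := hδeq ▸ dist_pos.2 (fun h => hij (hxmin.1 h))
  by_cases hδε : sepDist x ≤ ε
  case neg =>
    have h1 : min ε B * (N:ℝ) ^ (-γ) ≤ ε * 1 :=
      mul_le_mul (min_le_left _ _) hpow1 hpow0 hε.le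
    push_neg at hδε
    linarith
  case pos =>
    have hcwb : cw ≤ w (x i) (x j) := hdiag _ _ (by rw [← hδeq]; exact hδε)
    set r : ℝ := c * (N:ℝ) ^ (-(1/α)) with hrdef
    have hr : 0 < r := mul_pos hc (Real.rpow_pos_of_pos hNpos _)
    set D : Set A := Set.univ \ ⋃ k : Fin N, closedBall (x k) r with hDdef
    -- measure of D
    have hrα : C₀ * r ^ α = (mR/2) / N := by
      rw [hrdef, Real.mul_rpow hc.le (Real.rpow_nonneg hNpos.le _),
        ← Real.rpow_mul hNpos.le]
      have : -(1/α) * α = -1 := by field_simp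
      rw [this, Real.rpow_neg_one]
      rw [← mul_assoc, hckey]
      ring
    have hball : μ (⋃ k : Fin N, closedBall (x k) r) ≤ ENNReal.ofReal (mR/2) := by
      calc μ (⋃ k : Fin N, closedBall (x k) r)
          ≤ ∑' k : Fin N, μ (closedBall (x k) r) := measure_iUnion_le _
        _ = ∑ k : Fin N, μ (closedBall (x k) r) := tsum_fintype _
        _ ≤ ∑ k : Fin N, ENNReal.ofReal (C₀ * r ^ α) :=
            Finset.sum_le_sum fun k _ => hregall _ _ hr
        _ = (N:ℝ≥0∞) * ENNReal.ofReal (C₀ * r ^ α) := by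
            rw [Finset.sum_const, Finset.card_univ, Fintype.card_fin, nsmul_eq_mul]
        _ = ENNReal.ofReal ((N:ℝ) * (C₀ * r ^ α)) := by
            rw [← ENNReal.ofReal_natCast N,
              ← ENNReal.ofReal_mul (show (0:ℝ) ≤ (N:ℝ) from Nat.cast_nonneg N)]
        _ = ENNReal.ofReal (mR/2) := by
            rw [hrα]
            congr 1
            field_simp
    have hμD : ENNReal.ofReal (mR/2) ≤ μ D := by
      have hcover : μ Set.univ ≤ μ D + μ (⋃ k : Fin N, closedBall (x k) r) := by
        refine le_trans (measure_mono ?_) (measure_union_le _ _)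
        intro y _
        by_cases hy : y ∈ ⋃ k : Fin N, closedBall (x k) r
        · exact Or.inr hy
        · exact Or.inl ⟨trivial, hy⟩
      have hsplit : μ Set.univ = ENNReal.ofReal (mR/2) + ENNReal.ofReal (mR/2) := by
        rw [← ENNReal.ofReal_add (by positivity) (by positivity)]
        rw [show mR/2 + mR/2 = mR by ring]
        exact (ENNReal.ofReal_toReal hμfin).symm
      rw [hsplit] at hcover
      have h2 := hcover.trans (add_le_add_right hball _)
      exact (ENNReal.add_le_add_iff_right ENNReal.ofReal_ne_top).1 h2
    -- the conditional potential
    set U : A → ℝ := fun y => ∑ j' ∈ Finset.univ.erase i, w y (x j') / dist y (x j') ^ s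
      with hUdef
    have hUm : Measurable U :=
      Finset.measurable_sum _ fun j' _ => (hwm (x j')).div (by fun_prop)
    have hpoint : ∀ y ∈ D, U (x i) ≤ U y := by
      intro y hy
      refine aux_minimizer_pointwise s w hwsym x hxmin i y ?_
      intro k _ hyk
      have hmem : y ∈ closedBall (x k) r := by
        rw [hyk]; exact mem_closedBall_self hr.le
      exact hy.2 (Set.mem_iUnion.2 ⟨k, hmem⟩)
    have hUlb : cw * sepDist x ^ (-s) ≤ U (x i) := by
      have hjmem : j ∈ Finset.univ.erase i :=
        Finset.mem_erase.2 ⟨fun h => hij h.symm, Finset.mem_univ j⟩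
      have h1 : cw * sepDist x ^ (-s) ≤ w (x i) (x j) / dist (x i) (x j) ^ s := by
        rw [← hδeq, Real.rpow_neg hδpos.le, div_eq_mul_inv]
        refine mul_le_mul_of_nonneg_right hcwb ?_
        positivity
      refine h1.trans ?_
      have h2 : w (x i) (x j) / dist (x i) (x j) ^ s ≤ U (x i) := by
        simp only [hUdef]
        exact Finset.single_le_sum
          (fun k _ => div_nonneg (hwnn _ _) (Real.rpow_nonneg dist_nonneg _)) hjmem
      exact h2
    -- main chain in ℝ≥0∞
    have hchain : ENNReal.ofReal (cw * sepDist x ^ (-s)) * ENNReal.ofReal (mR/2)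
        ≤ (N:ℝ≥0∞) * (W * ENNReal.ofReal ((K * r ^ (α - s*q)) ^ (1/q))) := by
      calc ENNReal.ofReal (cw * sepDist x ^ (-s)) * ENNReal.ofReal (mR/2)
          ≤ ENNReal.ofReal (U (x i)) * μ D :=
            mul_le_mul (ENNReal.ofReal_le_ofReal hUlb) hμD zero_le zero_le
        _ = ∫⁻ _ in D, ENNReal.ofReal (U (x i)) ∂μ := (setLIntegral_const _ _).symm
        _ ≤ ∫⁻ y in D, ENNReal.ofReal (U y) ∂μ :=
            setLIntegral_mono hUm.ennreal_ofReal fun y hy =>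
              ENNReal.ofReal_le_ofReal (hpoint y hy)
        _ = ∫⁻ y in D, ∑ j' ∈ Finset.univ.erase i,
              ENNReal.ofReal (w y (x j') / dist y (x j') ^ s) ∂μ := by
            refine lintegral_congr fun y => ?_
            exact ENNReal.ofReal_sum_of_nonneg fun k _ =>
              div_nonneg (hwnn _ _) (Real.rpow_nonneg dist_nonneg _)
        _ = ∑ j' ∈ Finset.univ.erase i,
              ∫⁻ y in D, ENNReal.ofReal (w y (x j') / dist y (x j') ^ s) ∂μ :=
            lintegral_finset_sum' _ fun j' _ =>
              ((hwm (x j')).div (by fun_prop)).ennreal_ofReal.aemeasurable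
        _ ≤ ∑ _j' ∈ Finset.univ.erase i,
              (W * ENNReal.ofReal ((K * r ^ (α - s*q)) ^ (1/q))) := by
            refine Finset.sum_le_sum fun j' _ => ?_
            calc ∫⁻ y in D, ENNReal.ofReal (w y (x j') / dist y (x j') ^ s) ∂μ
                ≤ ∫⁻ y in (closedBall (x j') r)ᶜ,
                    ENNReal.ofReal (w y (x j') / dist y (x j') ^ s) ∂μ := by
                  refine lintegral_mono_set fun y hy hmem => ?_
                  exact hy.2 (Set.mem_iUnion.2 ⟨j', hmem⟩)
              _ ≤ W * (∫⁻ y in (closedBall (x j') r)ᶜ,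
                    ENNReal.ofReal (dist y (x j') ^ (-(s*q))) ∂μ) ^ (1/q) :=
                  hhold (x j') _
              _ ≤ W * (ENNReal.ofReal (K * r ^ (α - s*q))) ^ (1/q) :=
                  mul_le_mul_right
                    (ENNReal.rpow_le_rpow (htail (x j') r hr) (by positivity)) _
              _ = W * ENNReal.ofReal ((K * r ^ (α - s*q)) ^ (1/q)) := by
                  rw [ENNReal.ofReal_rpow_of_pos (by positivity)]
        _ ≤ (N:ℝ≥0∞) * (W * ENNReal.ofReal ((K * r ^ (α - s*q)) ^ (1/q))) := by
            rw [Finset.sum_const, nsmul_eq_mul]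
            refine mul_le_mul_left ?_ _
            have hcard : (Finset.univ.erase i).card ≤ N := by
              calc (Finset.univ.erase i).card ≤ (Finset.univ : Finset (Fin N)).card :=
                Finset.card_erase_le.trans le_rfl
                _ = N := by simp
            exact_mod_cast hcard
    -- back to the reals
    have hreal : cw * sepDist x ^ (-s) * (mR/2)
        ≤ (N:ℝ) * (W.toReal * (K * r ^ (α - s*q)) ^ (1/q)) := by
      have hW' : W = ENNReal.ofReal W.toReal := (ENNReal.ofReal_toReal hWne).symm
      rw [hW', ← ENNReal.ofReal_natCast N,
        ← ENNReal.ofReal_mul hWR,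
        ← ENNReal.ofReal_mul (Nat.cast_nonneg N),
        ← ENNReal.ofReal_mul (by positivity)] at hchain
      exact (ENNReal.ofReal_le_ofReal_iff (by positivity)).1 hchain
    -- exponent bookkeeping
    have hrpow : (K * r ^ (α - s*q)) ^ (1/q)
        = K ^ (1/q) * c ^ ((α - s*q) * (1/q)) * (N:ℝ) ^ (-(1/α) * (α - s*q) * (1/q)) := by
      rw [hrdef, Real.mul_rpow hc.le (Real.rpow_nonneg hNpos.le _),
        ← Real.rpow_mul hNpos.le,
        Real.mul_rpow hK.le (by positivity),
        Real.mul_rpow (by positivity) (by positivity),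
        ← Real.rpow_mul hc.le, ← Real.rpow_mul hNpos.le]
      ring_nf
    have hexp_eq : 1 + -(1/α) * (α - s*q) * (1/q) = s * γ := by
      rw [hγdef, hγrw]
      field_simp
      ring
    have hfinal : cw * (mR/2) * sepDist x ^ (-s) ≤ DEN * (N:ℝ) ^ (s * γ) := by
      have h1 : (N:ℝ) * (W.toReal * (K * r ^ (α - s*q)) ^ (1/q))
          = W.toReal * (K ^ (1/q) * c ^ ((α - s*q) * (1/q)))
              * ((N:ℝ) ^ (1:ℝ) * (N:ℝ) ^ (-(1/α) * (α - s*q) * (1/q))) := by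
        rw [hrpow, Real.rpow_one]
        ring
      have h2 : (N:ℝ) ^ (1:ℝ) * (N:ℝ) ^ (-(1/α) * (α - s*q) * (1/q))
          = (N:ℝ) ^ (s * γ) := by
        rw [← Real.rpow_add hNpos, hexp_eq]
      have h3 : W.toReal * (K ^ (1/q) * c ^ ((α - s*q) * (1/q))) ≤ DEN := by
        rw [hDEN]
        have hpos : (0:ℝ) < K ^ (1/q) * c ^ ((α - s*q) * (1/q)) := by positivity
        nlinarith
      have h4 : (0:ℝ) ≤ (N:ℝ) ^ (s * γ) := Real.rpow_nonneg hNpos.le _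
      calc cw * (mR/2) * sepDist x ^ (-s)
          = cw * sepDist x ^ (-s) * (mR/2) := by ring
        _ ≤ (N:ℝ) * (W.toReal * (K * r ^ (α - s*q)) ^ (1/q)) := hreal
        _ = W.toReal * (K ^ (1/q) * c ^ ((α - s*q) * (1/q))) * (N:ℝ) ^ (s * γ) := by
            rw [h1, h2]
        _ ≤ DEN * (N:ℝ) ^ (s * γ) := mul_le_mul_of_nonneg_right h3 h4
    -- conclude
    have hEpos : (0:ℝ) < DEN / (cw * (mR/2)) := by positivity
    have hδs : sepDist x ^ (-s) ≤ DEN / (cw * (mR/2)) * (N:ℝ) ^ (s * γ) := by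
      rw [div_mul_eq_mul_div, le_div_iff₀ (by positivity)]
      calc sepDist x ^ (-s) * (cw * (mR/2)) = cw * (mR/2) * sepDist x ^ (-s) := by ring
        _ ≤ DEN * (N:ℝ) ^ (s * γ) := hfinal
    have hkey : (DEN / (cw * (mR/2)) * (N:ℝ) ^ (s * γ)) ^ (-(1/s)) ≤ sepDist x := by
      have h5 : (DEN / (cw * (mR/2)) * (N:ℝ) ^ (s * γ)) ^ (-(1/s))
          ≤ (sepDist x ^ (-s)) ^ (-(1/s)) := by
        refine Real.rpow_le_rpow_of_nonpos (Real.rpow_pos_of_pos hδpos _) hδs ?_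
        rw [neg_nonpos]
        positivity
      have h6 : (sepDist x ^ (-s)) ^ (-(1/s)) = sepDist x := by
        rw [← Real.rpow_mul hδpos.le]
        rw [show -s * -(1/s) = 1 by field_simp]
        exact Real.rpow_one _
      rwa [h6] at h5
    have hsplit2 : (DEN / (cw * (mR/2)) * (N:ℝ) ^ (s * γ)) ^ (-(1/s))
        = B * (N:ℝ) ^ (-γ) := by
      rw [Real.mul_rpow hEpos.le (Real.rpow_nonneg hNpos.le _),
        ← Real.rpow_mul hNpos.le]
      congr 1
      · rw [hB, show cw * (mR/2) / DEN = (DEN / (cw * (mR/2)))⁻¹ by rw [inv_div],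
          Real.inv_rpow hEpos.le, ← Real.rpow_neg hEpos.le]
      · congr 1
        field_simp
    have h7 : B * (N:ℝ) ^ (-γ) ≤ sepDist x := by
      rw [← hsplit2]; exact hkey
    calc min ε B * (N:ℝ) ^ (-γ) ≤ B * (N:ℝ) ^ (-γ) :=
        mul_le_mul_of_nonneg_right (min_le_right _ _) hpow0
      _ ≤ sepDist x := h7
end
end

section
/- Let A be a compact infinite metric space carrying an upper α-regular measure μ with μ(A) > 0 and upper regularity constant C₀ (so μ(B(x,r)) ≤ C₀ r^α for all x ∈ A, 0 < r ≤ diam(A)), and let s > α. Then for every N ≥ 2, every N-point configuration ω*_N minimizing the unweighted Riesz s-energy E_s(ω_N) = Σ_{i ≠ j} m(x_i,x_j)^{−s} over N-point subsets of A satisfies δ(ω*_N) ≥ [ (μ(A)/C₀)(1 − α/s) ]^{1/α} · (α/s)^{1/s} · N^{−1/α}. -/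
open Metric MeasureTheory Filter
open scoped ENNReal NNReal

noncomputable section

variable {A : Type*} [MetricSpace A]

-- Auxiliary lemmas

lemma riesz_decomp {N : ℕ} (s : ℝ) (u : Fin N → A) (i : Fin N) :
    rieszEnergy s (fun _ _ => (1:ℝ)) u =
      (∑ k ∈ Finset.univ.erase i, ∑ l ∈ Finset.univ.erase i,
        if k = l then 0 else 1 / dist (u k) (u l) ^ s)
      + 2 * ∑ l ∈ Finset.univ.erase i, 1 / dist (u i) (u l) ^ s := by
  unfold rieszEnergy
  rw [← Finset.sum_erase_add _ _ (Finset.mem_univ i)]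
  have hrow : ∀ k : Fin N, (∑ l : Fin N, if k = l then 0 else 1 / dist (u k) (u l) ^ s)
      = (∑ l ∈ Finset.univ.erase i, if k = l then 0 else 1 / dist (u k) (u l) ^ s)
        + (if k = i then 0 else 1 / dist (u k) (u i) ^ s) := by
    intro k
    rw [← Finset.sum_erase_add _ _ (Finset.mem_univ i)]
  have h1 : ∀ k ∈ Finset.univ.erase i,
      (∑ l : Fin N, if k = l then 0 else 1 / dist (u k) (u l) ^ s)
      = (∑ l ∈ Finset.univ.erase i, if k = l then 0 else 1 / dist (u k) (u l) ^ s)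
        + 1 / dist (u i) (u k) ^ s := by
    intro k hk
    rw [hrow k, if_neg (Finset.ne_of_mem_erase hk), dist_comm]
  rw [Finset.sum_congr rfl h1, Finset.sum_add_distrib, hrow i, if_pos rfl]
  have h2 : (∑ l ∈ Finset.univ.erase i, if i = l then 0 else 1 / dist (u i) (u l) ^ s)
      = ∑ l ∈ Finset.univ.erase i, 1 / dist (u i) (u l) ^ s := by
    refine Finset.sum_congr rfl fun l hl => ?_
    rw [if_neg (Ne.symm (Finset.ne_of_mem_erase hl))]
  rw [h2]
  ring

lemma swap_ineq {N : ℕ} (s : ℝ) (x : Fin N → A)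
    (hx : IsEnergyMinimizer s (fun _ _ => (1:ℝ)) Set.univ x) (i : Fin N) (y : A)
    (hy : ∀ k, k ≠ i → y ≠ x k) :
    ∑ k ∈ Finset.univ.erase i, 1 / dist (x i) (x k) ^ s ≤
      ∑ k ∈ Finset.univ.erase i, 1 / dist y (x k) ^ s := by
  set z : Fin N → A := Function.update x i y with hz
  have hzi : z i = y := Function.update_self i y x
  have hzk : ∀ k, k ≠ i → z k = x k := fun k hk => Function.update_of_ne hk y x
  have hz_inj : Function.Injective z := by
    intro a b hab
    by_cases ha : a = i <;> by_cases hb : b = i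
    · rw [ha, hb]
    · rw [ha, hzi, hzk b hb] at hab; exact absurd hab (hy b hb)
    · rw [hb, hzi, hzk a ha] at hab; exact absurd hab.symm (hy a ha)
    · rw [hzk a ha, hzk b hb] at hab; exact hx.1 hab
  have hE := hx.2.2 z hz_inj (fun _ => trivial)
  rw [riesz_decomp s x i, riesz_decomp s z i] at hE
  have hdd : (∑ k ∈ Finset.univ.erase i, ∑ l ∈ Finset.univ.erase i,
        if k = l then 0 else 1 / dist (z k) (z l) ^ s)
      = (∑ k ∈ Finset.univ.erase i, ∑ l ∈ Finset.univ.erase i,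
        if k = l then 0 else 1 / dist (x k) (x l) ^ s) := by
    refine Finset.sum_congr rfl fun k hk => Finset.sum_congr rfl fun l hl => ?_
    rw [hzk k (Finset.ne_of_mem_erase hk), hzk l (Finset.ne_of_mem_erase hl)]
  have hrow : (∑ l ∈ Finset.univ.erase i, 1 / dist (z i) (z l) ^ s)
      = ∑ l ∈ Finset.univ.erase i, 1 / dist y (x l) ^ s := by
    refine Finset.sum_congr rfl fun l hl => ?_
    rw [hzi, hzk l (Finset.ne_of_mem_erase hl)]
  rw [hdd, hrow] at hE
  linarith

lemma ball_bound [MeasurableSpace A] (α C₀ : ℝ) (hα : 0 < α) (hC₀ : 0 < C₀)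
    (μ : Measure A) (hreg : IsUpperRegular μ α C₀)
    (hμuniv : μ Set.univ ≤ ENNReal.ofReal (C₀ * diam (Set.univ : Set A) ^ α))
    (p : A) (ρ : ℝ) (hρ : 0 < ρ) :
    μ (closedBall p ρ) ≤ ENNReal.ofReal (C₀ * ρ ^ α) := by
  by_cases h : ρ ≤ diam (Set.univ : Set A)
  · exact hreg p ρ hρ h
  · push_neg at h
    calc μ (closedBall p ρ) ≤ μ Set.univ := measure_mono (Set.subset_univ _)
    _ ≤ ENNReal.ofReal (C₀ * diam (Set.univ : Set A) ^ α) := hμuniv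
    _ ≤ ENNReal.ofReal (C₀ * ρ ^ α) := by
        apply ENNReal.ofReal_le_ofReal
        exact mul_le_mul_of_nonneg_left (Real.rpow_le_rpow diam_nonneg h.le hα.le) hC₀.le

lemma tail_bound [MeasurableSpace A] [OpensMeasurableSpace A]
    (α C₀ : ℝ) (hα : 0 < α) (hC₀ : 0 < C₀)
    (μ : Measure A) (hreg : IsUpperRegular μ α C₀)
    (hμuniv : μ Set.univ ≤ ENNReal.ofReal (C₀ * diam (Set.univ : Set A) ^ α))
    (s : ℝ) (hs : α < s) (p : A) (r : ℝ) (hr : 0 < r) :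
    ∫⁻ y in (closedBall p r)ᶜ, ENNReal.ofReal (1 / dist y p ^ s) ∂μ ≤
      ENNReal.ofReal (C₀ * (s / (s - α)) * r ^ (α - s)) := by
  have hspos : 0 < s := hα.trans hs
  set f : A → ℝ := fun y => 1 / dist y p ^ s with hf
  have hf_mble : Measurable f := by
    apply Measurable.div measurable_const
    exact ((continuous_id.dist continuous_const).rpow_const
      (fun y => Or.inr hspos.le)).measurable
  set ν : Measure A := μ.restrict (closedBall p r)ᶜ with hν
  have layer : ∫⁻ y, ENNReal.ofReal (f y) ∂ν = ∫⁻ t in Set.Ioi 0, ν {a : A | t < f a} := by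
    refine lintegral_eq_lintegral_meas_lt ν ?_ hf_mble.aemeasurable
    filter_upwards with y
    positivity
  set T : ℝ := r ^ (-s) with hT
  have hT0 : 0 < T := Real.rpow_pos_of_pos hr _
  have key : ∀ t ∈ Set.Ioi (0:ℝ), ν {a : A | t < f a} ≤
      (Set.Ioc (0:ℝ) T).indicator (fun t => ENNReal.ofReal (C₀ * t ^ (-(α/s)))) t := by
    intro t ht
    simp only [Set.mem_Ioi] at ht
    by_cases htT : t ≤ T
    · rw [Set.indicator_of_mem (Set.mem_Ioc.mpr ⟨ht, htT⟩)]
      have hsub : {a : A | t < f a} ⊆ closedBall p (t ^ (-(1/s))) := by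
        intro a ha
        simp only [Set.mem_setOf_eq, hf] at ha
        have h0 : 0 ≤ dist a p ^ s := Real.rpow_nonneg dist_nonneg s
        have hds : 0 < dist a p ^ s := by
          rcases h0.eq_or_lt with h | h
          · exfalso; rw [← h] at ha; simp at ha; linarith
          · exact h
        have hds1 : dist a p ^ s ≤ t⁻¹ := by
          have h1 : t * (dist a p ^ s) < 1 := (lt_div_iff₀ hds).mp ha
          rw [← one_div, le_div_iff₀ ht]
          nlinarith
        have h2 : (dist a p ^ s) ^ (1/s) ≤ (t⁻¹) ^ (1/s) :=
          Real.rpow_le_rpow h0 hds1 (by positivity)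
        rw [← Real.rpow_mul dist_nonneg, mul_one_div, div_self hspos.ne',
          Real.rpow_one, ← Real.rpow_neg_one t, ← Real.rpow_mul ht.le] at h2
        rw [mem_closedBall]
        convert h2 using 2
        ring
      calc ν {a : A | t < f a} ≤ μ (closedBall p (t ^ (-(1/s)))) :=
            le_trans ((Measure.restrict_le_self) _) (measure_mono hsub)
      _ ≤ ENNReal.ofReal (C₀ * (t ^ (-(1/s))) ^ α) :=
            ball_bound α C₀ hα hC₀ μ hreg hμuniv p _ (Real.rpow_pos_of_pos ht _)
      _ = ENNReal.ofReal (C₀ * t ^ (-(α/s))) := by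
            rw [← Real.rpow_mul ht.le]
            congr 2
            ring
    · push_neg at htT
      rw [Set.indicator_of_notMem (by simp [htT.not_ge] : t ∉ Set.Ioc (0:ℝ) T)]
      have hE : MeasurableSet {a : A | t < f a} := measurableSet_lt measurable_const hf_mble
      rw [hν, Measure.restrict_apply hE]
      have hempty : {a : A | t < f a} ∩ (closedBall p r)ᶜ = ∅ := by
        ext a
        simp only [Set.mem_inter_iff, Set.mem_setOf_eq, Set.mem_compl_iff, mem_closedBall,
          Set.mem_empty_iff_false, iff_false, not_and, not_not, hf]
        intro hfa
        by_contra hda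
        push_neg at hda
        have h1 : r ^ s < dist a p ^ s := Real.rpow_lt_rpow hr.le hda hspos
        have h2 : f a < T := by
          rw [hf, hT, Real.rpow_neg hr.le, ← one_div]
          apply div_lt_div_of_pos_left one_pos (by positivity) h1
        simp only [hf] at h2 hfa
        linarith
      rw [hempty, measure_empty]
  calc ∫⁻ y in (closedBall p r)ᶜ, ENNReal.ofReal (1 / dist y p ^ s) ∂μ
      = ∫⁻ t in Set.Ioi 0, ν {a : A | t < f a} := layer
    _ ≤ ∫⁻ t in Set.Ioi 0, (Set.Ioc (0:ℝ) T).indicator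
          (fun t => ENNReal.ofReal (C₀ * t ^ (-(α/s)))) t :=
        setLIntegral_mono' measurableSet_Ioi key
    _ ≤ ∫⁻ t, (Set.Ioc (0:ℝ) T).indicator
          (fun t => ENNReal.ofReal (C₀ * t ^ (-(α/s)))) t := setLIntegral_le_lintegral _ _
    _ = ∫⁻ t in Set.Ioc (0:ℝ) T, ENNReal.ofReal (C₀ * t ^ (-(α/s))) := by
        rw [lintegral_indicator measurableSet_Ioc]
    _ ≤ ENNReal.ofReal (C₀ * (s / (s - α)) * r ^ (α - s)) := by
        have hq : (-1:ℝ) < -(α/s) := by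
          have : α / s < 1 := (div_lt_one hspos).mpr hs
          linarith
        have hii : IntervalIntegrable (fun t : ℝ => C₀ * t ^ (-(α/s))) volume 0 T :=
          (intervalIntegral.intervalIntegrable_rpow' hq).const_mul C₀
        have hint : IntegrableOn (fun t : ℝ => C₀ * t ^ (-(α/s))) (Set.Ioc (0:ℝ) T) volume := by
          have := intervalIntegrable_iff.mp hii
          rwa [Set.uIoc_of_le hT0.le] at this
        have hnn : 0 ≤ᵐ[volume.restrict (Set.Ioc (0:ℝ) T)] fun t : ℝ => C₀ * t ^ (-(α/s)) := by
          rw [EventuallyLE, ae_restrict_iff' measurableSet_Ioc]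
          filter_upwards with t ht
          have := ht.1
          positivity
        rw [← ofReal_integral_eq_lintegral_ofReal hint hnn]
        apply ENNReal.ofReal_le_ofReal
        rw [← intervalIntegral.integral_of_le hT0.le]
        rw [intervalIntegral.integral_const_mul, integral_rpow (Or.inl hq)]
        have hgt : (0:ℝ) < -(α/s) + 1 := by linarith
        rw [Real.zero_rpow (ne_of_gt hgt)]
        have hTpow : T ^ (-(α/s) + 1) = r ^ (α - s) := by
          rw [hT, ← Real.rpow_mul hr.le]
          congr 1
          field_simp
          ring
        rw [hTpow, sub_zero]
        apply le_of_eq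
        have hsa : s - α ≠ 0 := by intro h; rw [sub_eq_zero] at h; exact absurd h.symm hs.ne
        have h3 : -(α/s) + 1 = (s-α)/s := by field_simp; ring
        rw [h3, div_div_eq_mul_div]
        ring
/-- explicit separation constant for unweighted minimal Riesz
`s`-energy configurations on an upper `α`-regular compact metric space. -/
theorem stmt_2 {A : Type*} [MetricSpace A] [CompactSpace A] [Infinite A]
    [MeasurableSpace A] [BorelSpace A]
    (α : ℝ) (hα : 0 < α) (μ : Measure A) (C₀ : ℝ)
    (hreg : IsUpperRegular μ α C₀) (hμpos : 0 < μ Set.univ)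
    (s : ℝ) (hs : α < s)
    (N : ℕ) (hN : 2 ≤ N) (x : Fin N → A)
    (hx : IsEnergyMinimizer s (fun _ _ => (1 : ℝ)) Set.univ x) :
    sepDist x ≥ ((μ Set.univ).toReal / C₀ * (1 - α / s)) ^ (1 / α) *
      (α / s) ^ (1 / s) * (N : ℝ) ^ (-(1 / α)) := by

  obtain ⟨hxinj, -, -⟩ := id hx
  have hnt : Nontrivial A := inferInstance
  obtain ⟨a, b, hab⟩ := exists_pair_ne A
  have hbd : Bornology.IsBounded (Set.univ : Set A) := isCompact_univ.isBounded
  have hd : 0 < diam (Set.univ : Set A) :=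
    lt_of_lt_of_le (dist_pos.mpr hab) (dist_le_diam_of_mem hbd trivial trivial)
  have hμuniv : μ Set.univ ≤ ENNReal.ofReal (C₀ * diam (Set.univ : Set A) ^ α) := by
    refine le_trans (measure_mono (fun q _ => ?_)) (hreg a _ hd le_rfl)
    exact mem_closedBall.mpr (dist_le_diam_of_mem hbd trivial trivial)
  have hC₀ : 0 < C₀ := by
    by_contra h
    push_neg at h
    have h0 : C₀ * diam (Set.univ : Set A) ^ α ≤ 0 :=
      mul_nonpos_of_nonpos_of_nonneg h (Real.rpow_nonneg diam_nonneg α)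
    rw [ENNReal.ofReal_eq_zero.mpr h0] at hμuniv
    exact absurd (le_antisymm hμuniv zero_le) hμpos.ne'
  have hμfin : μ Set.univ ≠ ⊤ := ne_top_of_le_ne_top ENNReal.ofReal_ne_top hμuniv
  set μA : ℝ := (μ Set.univ).toReal with hμAdef
  have hμA : 0 < μA := ENNReal.toReal_pos hμpos.ne' hμfin
  have hspos : 0 < s := hα.trans hs
  have hfrac : 0 < 1 - α/s := by
    have : α / s < 1 := (div_lt_one hspos).mpr hs
    linarith
  have hNpos : (0:ℝ) < (N:ℝ) := by
    have : 0 < N := by omega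
    exact_mod_cast this
  set r : ℝ := (μA * (1 - α/s) / (C₀ * N)) ^ (1/α) with hrdef
  have hbase : 0 < μA * (1 - α/s) / (C₀ * N) := by positivity
  have hr : 0 < r := Real.rpow_pos_of_pos hbase _
  have hrα : r ^ α = μA * (1 - α/s) / (C₀ * N) := by
    rw [hrdef, ← Real.rpow_mul hbase.le, one_div, inv_mul_cancel₀ hα.ne', Real.rpow_one]
  have main : ∀ i j : Fin N, i ≠ j → (α/s)^(1/s) * r ≤ dist (x i) (x j) := by
    intro i j hij
    set D : Set A := ⋂ (k : Fin N) (_ : k ≠ i), (closedBall (x k) r)ᶜ with hD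
    have hDmeas : MeasurableSet D :=
      MeasurableSet.iInter fun k => MeasurableSet.iInter fun _ =>
        measurableSet_closedBall.compl
    have hDsub : ∀ k, k ≠ i → D ⊆ (closedBall (x k) r)ᶜ := by
      intro k hk y hy
      rw [hD, Set.mem_iInter] at hy
      exact Set.mem_iInter.mp (hy k) hk
    have hDc : μ Dᶜ ≤ ENNReal.ofReal (μA * (1 - α/s)) := by
      have h1 : Dᶜ = ⋃ (k : Fin N) (_ : k ≠ i), closedBall (x k) r := by
        rw [hD]
        simp [Set.compl_iInter]
      rw [h1]
      calc μ (⋃ (k : Fin N) (_ : k ≠ i), closedBall (x k) r)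
          ≤ ∑' k : Fin N, μ (⋃ (_ : k ≠ i), closedBall (x k) r) := measure_iUnion_le _
        _ ≤ ∑' k : Fin N, ENNReal.ofReal (C₀ * r^α) := by
            refine ENNReal.tsum_le_tsum fun k => ?_
            refine le_trans (measure_mono (Set.iUnion_subset fun _ => subset_rfl)) ?_
            exact ball_bound α C₀ hα hC₀ μ hreg hμuniv (x k) r hr
        _ = (N : ℝ≥0∞) * ENNReal.ofReal (C₀ * r^α) := by
            rw [tsum_fintype]
            simp [Finset.card_univ, mul_comm]
        _ = ENNReal.ofReal ((N:ℝ) * (C₀ * r^α)) := by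
            rw [← ENNReal.ofReal_natCast N, ← ENNReal.ofReal_mul (Nat.cast_nonneg N)]
        _ = ENNReal.ofReal (μA * (1 - α/s)) := by
            congr 1
            rw [hrα]
            field_simp
    have hDlow : ENNReal.ofReal (μA * (α/s)) ≤ μ D := by
      have hsum : μ D + μ Dᶜ = μ Set.univ := measure_add_measure_compl hDmeas
      have h2 : μ Set.univ = ENNReal.ofReal (μA * (α/s)) + ENNReal.ofReal (μA * (1 - α/s)) := by
        rw [← ENNReal.ofReal_add (by positivity) (by positivity),
          show μA * (α/s) + μA * (1-α/s) = μA by ring]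
        exact (ENNReal.ofReal_toReal hμfin).symm
      have h3 : ENNReal.ofReal (μA * (α/s)) + ENNReal.ofReal (μA * (1 - α/s))
          ≤ μ D + ENNReal.ofReal (μA * (1 - α/s)) := by
        rw [← h2, ← hsum]
        exact add_le_add le_rfl hDc
      exact (ENNReal.add_le_add_iff_right ENNReal.ofReal_ne_top).mp h3
    set U : A → ℝ := fun y => ∑ k ∈ Finset.univ.erase i, 1 / dist y (x k) ^ s with hU
    have hUnn : ∀ y, 0 ≤ U y := by
      intro y
      apply Finset.sum_nonneg
      intro k _
      positivity
    have hswap : ∀ y ∈ D, U (x i) ≤ U y := by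
      intro y hyD
      refine swap_ineq s x hx i y fun k hk heq => ?_
      have h4 := hDsub k hk hyD
      apply h4
      rw [heq, mem_closedBall, dist_self]
      exact hr.le
    have hfmble : ∀ k : Fin N, Measurable (fun y => 1 / dist y (x k) ^ s) := by
      intro k
      apply Measurable.div measurable_const
      exact ((continuous_id.dist continuous_const).rpow_const
        (fun y => Or.inr hspos.le)).measurable
    have hup : ∫⁻ y in D, ENNReal.ofReal (U y) ∂μ ≤
        ENNReal.ofReal ((N:ℝ) * (C₀ * (s/(s-α)) * r^(α-s))) := by
      have hsplit : ∀ y : A, ENNReal.ofReal (U y)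
          = ∑ k ∈ Finset.univ.erase i, ENNReal.ofReal (1 / dist y (x k) ^ s) := by
        intro y
        rw [hU]
        exact ENNReal.ofReal_sum_of_nonneg fun k _ => by positivity
      calc ∫⁻ y in D, ENNReal.ofReal (U y) ∂μ
          = ∑ k ∈ Finset.univ.erase i,
              ∫⁻ y in D, ENNReal.ofReal (1 / dist y (x k) ^ s) ∂μ := by
            simp_rw [hsplit]
            exact lintegral_finset_sum' _ fun k _ => ((hfmble k).ennreal_ofReal).aemeasurable
        _ ≤ ∑ k ∈ Finset.univ.erase i, ENNReal.ofReal (C₀ * (s/(s-α)) * r^(α-s)) := by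
            refine Finset.sum_le_sum fun k hk => ?_
            refine le_trans (lintegral_mono_set (hDsub k (Finset.ne_of_mem_erase hk))) ?_
            exact tail_bound α C₀ hα hC₀ μ hreg hμuniv s hs (x k) r hr
        _ ≤ ∑ _k : Fin N, ENNReal.ofReal (C₀ * (s/(s-α)) * r^(α-s)) :=
            Finset.sum_le_sum_of_subset (Finset.subset_univ _)
        _ = (N : ℝ≥0∞) * ENNReal.ofReal (C₀ * (s/(s-α)) * r^(α-s)) := by
            simp [Finset.card_univ, mul_comm]
        _ = ENNReal.ofReal ((N:ℝ) * (C₀ * (s/(s-α)) * r^(α-s))) := by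
            rw [← ENNReal.ofReal_natCast N, ← ENNReal.ofReal_mul (Nat.cast_nonneg N)]
    have hconst : ENNReal.ofReal (U (x i)) * μ D ≤ ∫⁻ y in D, ENNReal.ofReal (U y) ∂μ := by
      have h5 := setLIntegral_mono' (μ := μ) hDmeas
        (f := fun _ => ENNReal.ofReal (U (x i))) (g := fun y => ENNReal.ofReal (U y))
        (fun y hy => ENNReal.ofReal_le_ofReal (hswap y hy))
      simpa [lintegral_const, Measure.restrict_apply_univ] using h5
    have hkey : ENNReal.ofReal (U (x i) * (μA * (α/s)))
        ≤ ENNReal.ofReal ((N:ℝ) * (C₀ * (s/(s-α)) * r^(α-s))) := by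
      rw [ENNReal.ofReal_mul (hUnn (x i))]
      calc ENNReal.ofReal (U (x i)) * ENNReal.ofReal (μA * (α/s))
          ≤ ENNReal.ofReal (U (x i)) * μ D := mul_le_mul_right hDlow _
        _ ≤ _ := le_trans hconst hup
    have hsa' : (0:ℝ) < s - α := by linarith
    have hreal : U (x i) * (μA * (α/s)) ≤ (N:ℝ) * (C₀ * (s/(s-α)) * r^(α-s)) :=
      (ENNReal.ofReal_le_ofReal_iff (by positivity)).mp hkey
    have hterm : 1 / dist (x i) (x j) ^ s ≤ U (x i) := by
      show 1 / dist (x i) (x j) ^ s ≤ ∑ k ∈ Finset.univ.erase i, 1 / dist (x i) (x k) ^ s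
      refine Finset.single_le_sum (f := fun k => 1 / dist (x i) (x k) ^ s)
        (fun k _ => by positivity) ?_
      exact Finset.mem_erase.mpr ⟨hij.symm, Finset.mem_univ j⟩
    have hdpos : 0 < dist (x i) (x j) := dist_pos.mpr fun h => hij (hxinj h)
    have hds : 0 < dist (x i) (x j) ^ s := Real.rpow_pos_of_pos hdpos s
    have hrs : (0:ℝ) < r ^ s := Real.rpow_pos_of_pos hr s
    have h6 : (N:ℝ) * (C₀ * (s/(s-α)) * r^(α-s)) = μA / r^s := by
      have hsa : s - α ≠ 0 := by intro h; rw [sub_eq_zero] at h; exact absurd h.symm hs.ne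
      rw [Real.rpow_sub hr, hrα]
      field_simp
    have h5 : (1 / dist (x i) (x j) ^ s) * (μA * (α/s)) ≤ μA / r^s := by
      rw [← h6]
      exact le_trans (mul_le_mul_of_nonneg_right hterm (by positivity)) hreal
    have hgoal1 : (α/s) * r^s ≤ dist (x i) (x j) ^ s := by
      rw [one_div, inv_mul_eq_div, div_le_div_iff₀ hds hrs] at h5
      have h7 : μA * ((α/s) * r^s) ≤ μA * dist (x i) (x j) ^ s := by nlinarith
      exact le_of_mul_le_mul_left h7 hμA
    have h8 : ((α/s) * r^s) ^ (1/s) ≤ (dist (x i) (x j) ^ s) ^ (1/s) :=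
      Real.rpow_le_rpow (by positivity) hgoal1 (by positivity)
    rwa [Real.mul_rpow (by positivity) (by positivity),
      ← Real.rpow_mul hr.le, mul_one_div, div_self hspos.ne', Real.rpow_one,
      ← Real.rpow_mul hdpos.le, mul_one_div, div_self hspos.ne', Real.rpow_one] at h8
  have hRHS : ((μ Set.univ).toReal / C₀ * (1 - α / s)) ^ (1 / α) * (α / s) ^ (1 / s)
      * (N : ℝ) ^ (-(1/α)) = (α/s)^(1/s) * r := by
    rw [hrdef]
    have h9 : μA * (1 - α/s) / (C₀ * N) = (μA / C₀ * (1 - α/s)) * ((N:ℝ))⁻¹ := by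
      field_simp
    have h10 : ((μA / C₀ * (1 - α/s)) * ((N:ℝ))⁻¹) ^ (1/α)
        = (μA / C₀ * (1-α/s))^(1/α) * (N:ℝ)^(-(1/α)) := by
      rw [Real.mul_rpow (by positivity) (by positivity),
        Real.inv_rpow (Nat.cast_nonneg N), ← Real.rpow_neg (Nat.cast_nonneg N)]
    rw [h9, h10]
    ring
  rw [ge_iff_le, hRHS]
  unfold sepDist
  have hne : {d : ℝ | ∃ i j : Fin N, i ≠ j ∧ d = dist (x i) (x j)}.Nonempty := by
    refine ⟨dist (x ⟨0, by omega⟩) (x ⟨1, by omega⟩), ⟨0, by omega⟩, ⟨1, by omega⟩, ?_, rfl⟩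
    intro h
    have := Fin.mk.inj_iff.mp h
    omega
  refine le_csInf hne ?_
  rintro d ⟨i, j, hij, rfl⟩
  exact main i j hij
end
end

section
/- Let A be a compact metric space and β ∈ (0,1) such that for every x ∈ A and every r ∈ (0, diam(A)], the annulus B(x,r) \ B(x, βr) is nonempty. Then for every N ≥ 2 and every N-point configuration ω_N of distinct points in A, the mesh-separation ratio satisfies γ(ω_N, A) = ρ(ω_N, A)/δ(ω_N) ≥ β/2. -/
open Metric MeasureTheory Filter
open scoped ENNReal NNReal

noncomputable section

variable {A : Type*} [MetricSpace A]

/-- if every annulus `B(x,r) \ B(x,βr)` (for `0 < r ≤ diam A`) is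
nonempty, then every configuration has mesh-separation ratio at least `β/2`. -/
theorem stmt_12 {A : Type*} [MetricSpace A] [CompactSpace A]
    (β : ℝ) (hβ : β ∈ Set.Ioo (0 : ℝ) 1)
    (hann : ∀ (x : A) (r : ℝ), 0 < r → r ≤ diam (Set.univ : Set A) →
      ∃ y : A, y ∈ closedBall x r ∧ y ∉ closedBall x (β * r))
    (N : ℕ) (hN : 2 ≤ N) (x : Fin N → A) (hx : Function.Injective x) :
    meshNorm x Set.univ / sepDist x ≥ β / 2 := by
  obtain ⟨hβ0, hβ1⟩ := hβ
  have hNe : Nonempty (Fin N) := ⟨⟨0, by omega⟩⟩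
  set δ := sepDist x with hδdef
  set S := {d : ℝ | ∃ i j : Fin N, i ≠ j ∧ d = dist (x i) (x j)} with hSdef
  have hSfin : S.Finite := by
    apply (Set.finite_range (fun p : Fin N × Fin N => dist (x p.1) (x p.2))).subset
    rintro d ⟨i, j, -, rfl⟩; exact ⟨(i, j), rfl⟩
  have hSne : S.Nonempty := by
    refine ⟨_, ⟨0, by omega⟩, ⟨1, by omega⟩, ?_, rfl⟩
    simp [Fin.ext_iff]
  have hmem : δ ∈ S := hSne.csInf_mem hSfin
  obtain ⟨i, j, hij, hδeq⟩ := hmem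
  have hδpos : 0 < δ := by
    rw [hδeq]; exact dist_pos.2 (fun h => hij (hx h))
  have hδdiam : δ ≤ diam (Set.univ : Set A) := by
    rw [hδeq]
    exact dist_le_diam_of_mem isCompact_univ.isBounded trivial trivial
  obtain ⟨y, hy1, hy2⟩ := hann (x i) (δ / 2) (by linarith) (by linarith)
  have hy2' : β * (δ / 2) < dist y (x i) :=
    lt_of_not_ge (fun h => hy2 (mem_closedBall.2 h))
  have hy1' : dist y (x i) ≤ δ / 2 := mem_closedBall.1 hy1
  have hlow : ∀ k, β * δ / 2 ≤ dist y (x k) := by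
    intro k
    by_cases hk : k = i
    · subst hk; nlinarith
    · have hd : δ ≤ dist (x i) (x k) :=
        csInf_le hSfin.bddBelow ⟨i, k, Ne.symm hk, rfl⟩
      have htri : dist (x i) (x k) ≤ dist (x i) y + dist y (x k) :=
        dist_triangle _ _ _
      rw [dist_comm (x i) y] at htri
      nlinarith
  have hinf : β * δ / 2 ≤ ⨅ k, dist y (x k) := le_ciInf hlow
  have hbdd : BddAbove {d : ℝ | ∃ y ∈ (Set.univ : Set A), d = ⨅ i : Fin N, dist y (x i)} := by
    refine ⟨diam (Set.univ : Set A), ?_⟩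
    rintro d ⟨z, -, rfl⟩
    have h1 : (⨅ k : Fin N, dist z (x k)) ≤ dist z (x i) := by
      refine ciInf_le ⟨0, ?_⟩ i
      rintro _ ⟨k, rfl⟩; positivity
    exact h1.trans (dist_le_diam_of_mem isCompact_univ.isBounded trivial trivial)
  have hρ : β * δ / 2 ≤ meshNorm x Set.univ :=
    hinf.trans (le_csSup hbdd ⟨y, Set.mem_univ y, rfl⟩)
  rw [ge_iff_le, le_div_iff₀ hδpos]
  nlinarith
end
end

section
/- Let A be a compact infinite metric space, and for each s > 0 and N ≥ 2 let ω_N^s be an N-point configuration minimizing the unweighted Riesz s-energy over N-point subsets of A. Then (N(N−1))^{−1/s} δ_N(A) ≤ δ(ω_N^s) ≤ δ_N(A) for all s > 0, and consequently lim_{s→∞} δ(ω_N^s) = δ_N(A). -/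
open Metric MeasureTheory Filter
open scoped ENNReal NNReal

noncomputable section

variable {A : Type*} [MetricSpace A]

lemma sepSet_finite {N : ℕ} (x : Fin N → A) :
    {d : ℝ | ∃ i j : Fin N, i ≠ j ∧ d = dist (x i) (x j)}.Finite := by
  apply Set.Finite.subset (Set.finite_range fun p : Fin N × Fin N => dist (x p.1) (x p.2))
  rintro d ⟨i, j, -, rfl⟩
  exact ⟨(i, j), rfl⟩

lemma sepSet_nonempty {N : ℕ} (hN : 2 ≤ N) (x : Fin N → A) :
    {d : ℝ | ∃ i j : Fin N, i ≠ j ∧ d = dist (x i) (x j)}.Nonempty := by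
  refine ⟨_, ⟨⟨0, by omega⟩, ⟨1, by omega⟩, ?_, rfl⟩⟩
  simp [Fin.ext_iff]

lemma sepDist_mem {N : ℕ} (hN : 2 ≤ N) (x : Fin N → A) :
    ∃ i j : Fin N, i ≠ j ∧ sepDist x = dist (x i) (x j) :=
  (sepSet_nonempty hN x).csInf_mem (sepSet_finite x)

lemma sepDist_le {N : ℕ} (x : Fin N → A) {i j : Fin N} (h : i ≠ j) :
    sepDist x ≤ dist (x i) (x j) := by
  apply csInf_le
  · exact ⟨0, by rintro d ⟨i, j, -, rfl⟩; exact dist_nonneg⟩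
  · exact ⟨i, j, h, rfl⟩

lemma sepDist_pos {N : ℕ} (hN : 2 ≤ N) {x : Fin N → A} (hx : Function.Injective x) :
    0 < sepDist x := by
  obtain ⟨i, j, hij, heq⟩ := sepDist_mem hN x
  rw [heq]
  exact dist_pos.mpr fun h => hij (hx h)

lemma energy_term_nonneg {N : ℕ} (x : Fin N → A) (s : ℝ) (a b : Fin N) :
    (0:ℝ) ≤ if a = b then 0 else 1 / dist (x a) (x b) ^ s := by
  split
  · exact le_refl _
  · positivity

lemma energy_lower {N : ℕ} (hN : 2 ≤ N) (s : ℝ) (x : Fin N → A) :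
    (sepDist x) ^ (-s) ≤ rieszEnergy s (fun _ _ => (1 : ℝ)) x := by
  obtain ⟨i, j, hij, heq⟩ := sepDist_mem hN x
  have h1 : (sepDist x) ^ (-s) ≤ ∑ j : Fin N, if i = j then 0 else 1 / dist (x i) (x j) ^ s := by
    calc (sepDist x) ^ (-s) = 1 / dist (x i) (x j) ^ s := by
          rw [heq, Real.rpow_neg dist_nonneg, one_div]
      _ = if i = j then 0 else 1 / dist (x i) (x j) ^ s := by rw [if_neg hij]
      _ ≤ _ := Finset.single_le_sum (fun b _ => energy_term_nonneg x s i b) (Finset.mem_univ j)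
  refine h1.trans ?_
  exact Finset.single_le_sum
    (fun a _ => Finset.sum_nonneg fun b _ => energy_term_nonneg x s a b) (Finset.mem_univ i)

lemma energy_upper {N : ℕ} (hN : 2 ≤ N) {s : ℝ} (hs : 0 < s) {x : Fin N → A}
    (hx : Function.Injective x) :
    rieszEnergy s (fun _ _ => (1 : ℝ)) x ≤ ((N : ℝ) * ((N : ℝ) - 1)) * (sepDist x) ^ (-s) := by
  have hsep := sepDist_pos hN hx
  set c : ℝ := (sepDist x) ^ (-s) with hc
  have hstep : rieszEnergy s (fun _ _ => (1 : ℝ)) x ≤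
      ∑ _i : Fin N, ((N : ℝ) * c - c) := by
    apply Finset.sum_le_sum
    intro i _
    have hinner : (∑ j : Fin N, if i = j then (0:ℝ)
        else 1 / dist (x i) (x j) ^ s) ≤ ∑ j : Fin N, if i = j then (0:ℝ) else c := by
      apply Finset.sum_le_sum
      intro j _
      split
      · exact le_refl _
      · rename_i hij
        have hd : sepDist x ≤ dist (x i) (x j) := sepDist_le x hij
        rw [hc, Real.rpow_neg hsep.le, one_div]
        apply inv_anti₀ (Real.rpow_pos_of_pos hsep s)
        exact Real.rpow_le_rpow hsep.le hd hs.le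
    refine hinner.trans (le_of_eq ?_)
    have h2 : ∀ j : Fin N, (if i = j then (0:ℝ) else c) = c - (if i = j then c else 0) := by
      intro j; split <;> ring
    rw [Finset.sum_congr rfl fun j _ => h2 j, Finset.sum_sub_distrib, Finset.sum_const,
      Finset.card_univ, Fintype.card_fin, Finset.sum_ite_eq, if_pos (Finset.mem_univ i)]
    push_cast
    ring
  refine hstep.trans (le_of_eq ?_)
  rw [Finset.sum_const, Finset.card_univ, Fintype.card_fin]
  push_cast
  ring

/-- separation of unweighted minimal `s`-energy configurations is
squeezed between `(N(N-1))^{-1/s} δ_N(A)` and `δ_N(A)`, and converges to the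
best-packing distance as `s → ∞`. -/
theorem stmt_13 {A : Type*} [MetricSpace A] [CompactSpace A] [Infinite A]
    (N : ℕ) (hN : 2 ≤ N) (ω : ℝ → Fin N → A)
    (hω : ∀ s : ℝ, 0 < s → IsEnergyMinimizer s (fun _ _ => (1 : ℝ)) Set.univ (ω s)) :
    (∀ s : ℝ, 0 < s →
      ((N : ℝ) * ((N : ℝ) - 1)) ^ (-(1 / s)) * bestPackingDist (Set.univ : Set A) N ≤
          sepDist (ω s) ∧
        sepDist (ω s) ≤ bestPackingDist (Set.univ : Set A) N) ∧
    Tendsto (fun s : ℝ => sepDist (ω s)) atTop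
      (nhds (bestPackingDist (Set.univ : Set A) N)) := by
  set c : ℝ := (N : ℝ) * ((N : ℝ) - 1) with hc
  have hN2 : (2:ℝ) ≤ (N:ℝ) := by exact_mod_cast hN
  have hcpos : 0 < c := by nlinarith
  set T : Set ℝ := {d : ℝ | ∃ x : Fin N → A, Function.Injective x ∧ (∀ i, x i ∈ Set.univ) ∧
      d = sepDist x} with hT
  have hD : bestPackingDist (Set.univ : Set A) N = sSup T := rfl
  have hTne : T.Nonempty := by
    obtain ⟨e⟩ : Nonempty (ℕ ↪ A) := ⟨Infinite.natEmbedding A⟩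
    refine ⟨sepDist (fun i : Fin N => e i.val), fun i : Fin N => e i.val, ?_, fun _ => trivial, rfl⟩
    intro i j h
    exact Fin.val_injective (e.injective h)
  have hTbdd : BddAbove T := by
    refine ⟨diam (Set.univ : Set A), ?_⟩
    rintro d ⟨x, hxinj, -, rfl⟩
    obtain ⟨i, j, hij, heq⟩ := sepDist_mem hN x
    rw [heq]
    exact dist_le_diam_of_mem isCompact_univ.isBounded trivial trivial
  have key : ∀ s : ℝ, 0 < s →
      c ^ (-(1 / s)) * bestPackingDist (Set.univ : Set A) N ≤ sepDist (ω s) ∧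
      sepDist (ω s) ≤ bestPackingDist (Set.univ : Set A) N := by
    intro s hs
    obtain ⟨hinj, hmem, hmin⟩ := hω s hs
    have ha : 0 < sepDist (ω s) := sepDist_pos hN hinj
    set a : ℝ := sepDist (ω s)
    constructor
    · -- lower bound
      have claim : ∀ d ∈ T, d ≤ c ^ (1 / s) * a := by
        rintro d ⟨y, hyinj, -, rfl⟩
        have hb : 0 < sepDist y := sepDist_pos hN hyinj
        set b : ℝ := sepDist y
        have hchain : a ^ (-s) ≤ c * b ^ (-s) :=
          (energy_lower hN s (ω s)).trans
            ((hmin y hyinj fun _ => trivial).trans (energy_upper hN hs hyinj))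
        have hP : (0:ℝ) < a ^ s := Real.rpow_pos_of_pos ha s
        have hQ : (0:ℝ) < b ^ s := Real.rpow_pos_of_pos hb s
        rw [Real.rpow_neg ha.le, Real.rpow_neg hb.le] at hchain
        have h2 : b ^ s ≤ c * a ^ s := by
          calc b ^ s = (b ^ s * (a ^ s)⁻¹) * a ^ s := by field_simp
            _ ≤ (b ^ s * (c * (b ^ s)⁻¹)) * a ^ s := by
                apply mul_le_mul_of_nonneg_right _ hP.le
                exact mul_le_mul_of_nonneg_left hchain hQ.le
            _ = c * a ^ s := by field_simp
        have hkey : (c ^ (1 / s) * a) ^ s = c * a ^ s := by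
          rw [Real.mul_rpow (by positivity) ha.le, ← Real.rpow_mul hcpos.le,
            one_div_mul_cancel hs.ne', Real.rpow_one]
        exact (Real.rpow_le_rpow_iff hb.le (by positivity) hs).mp (hkey ▸ h2)
      have hsup : bestPackingDist (Set.univ : Set A) N ≤ c ^ (1 / s) * a := by
        rw [hD]; exact csSup_le hTne claim
      calc c ^ (-(1 / s)) * bestPackingDist (Set.univ : Set A) N
          ≤ c ^ (-(1 / s)) * (c ^ (1 / s) * a) :=
            mul_le_mul_of_nonneg_left hsup (Real.rpow_nonneg hcpos.le _)
        _ = a := by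
            rw [← mul_assoc, ← Real.rpow_add hcpos, neg_add_cancel, Real.rpow_zero, one_mul]
    · -- upper bound
      rw [hD]
      exact le_csSup hTbdd ⟨ω s, hinj, fun _ => trivial, rfl⟩
  refine ⟨key, ?_⟩
  have h0 : Tendsto (fun s : ℝ => -(1 / s)) atTop (nhds 0) := by
    simpa [one_div] using (tendsto_inv_atTop_zero (𝕜 := ℝ)).neg
  have hlim1 : Tendsto (fun s : ℝ => c ^ (-(1 / s))) atTop (nhds 1) := by
    have := (Real.continuousAt_const_rpow (a := c) (b := 0) hcpos.ne').tendsto.comp h0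
    simpa [Function.comp_def] using this
  have hlow : Tendsto (fun s : ℝ => c ^ (-(1 / s)) * bestPackingDist (Set.univ : Set A) N)
      atTop (nhds (bestPackingDist (Set.univ : Set A) N)) := by
    simpa using hlim1.mul_const (bestPackingDist (Set.univ : Set A) N)
  refine tendsto_of_tendsto_of_tendsto_of_le_of_le' hlow tendsto_const_nhds ?_ ?_
  · filter_upwards [eventually_gt_atTop 0] with s hs
    exact (key s hs).1
  · filter_upwards [eventually_gt_atTop 0] with s hs
    exact (key s hs).2
end
end

section
/- Let A be a compact infinite metric space and fix N ≥ 2. For each s > 0 let ω_N^s be an N-point configuration minimizing the unweighted Riesz s-energy over N-point subsets of A, and suppose ν_N ∈ A^N is a cluster point of (ω_N^s)_{s>0} as s → ∞ (i.e., ω_N^{s_j} → ν_N in the product topology on A^N for some sequence s_j → ∞). Then ν_N is an N-point best-packing configuration on A, i.e., δ(ν_N) = δ_N(A). -/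
open Metric MeasureTheory Filter
open scoped ENNReal NNReal

noncomputable section

variable {A : Type*} [MetricSpace A]

lemma sepSet_eq {N : ℕ} (x : Fin N → A) :
    {d : ℝ | ∃ i j : Fin N, i ≠ j ∧ d = dist (x i) (x j)} =
      (fun p : Fin N × Fin N => dist (x p.1) (x p.2)) '' {p | p.1 ≠ p.2} := by
  ext d
  constructor
  · rintro ⟨i, j, h, rfl⟩; exact ⟨(i, j), h, rfl⟩
  · rintro ⟨⟨i, j⟩, h, rfl⟩; exact ⟨i, j, h, rfl⟩

lemma sepSet_bddBelow {N : ℕ} (x : Fin N → A) :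
    BddBelow {d : ℝ | ∃ i j : Fin N, i ≠ j ∧ d = dist (x i) (x j)} :=
  ⟨0, by rintro d ⟨i, j, h, rfl⟩; exact dist_nonneg⟩

lemma le_sepDist {N : ℕ} (hN : 2 ≤ N) (x : Fin N → A) {c : ℝ}
    (h : ∀ i j : Fin N, i ≠ j → c ≤ dist (x i) (x j)) : c ≤ sepDist x :=
  le_csInf (sepSet_nonempty hN x) (by rintro d ⟨i, j, hij, rfl⟩; exact h i j hij)

lemma energy_lb {N : ℕ} (s : ℝ) (x : Fin N → A) {i0 j0 : Fin N} (h : i0 ≠ j0) :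
    1 / dist (x i0) (x j0) ^ s ≤ rieszEnergy s (fun _ _ => (1:ℝ)) x := by
  have hterm : ∀ i j : Fin N, (0:ℝ) ≤ if i = j then 0 else 1 / dist (x i) (x j) ^ s := by
    intro i j
    by_cases hij : i = j
    · rw [if_pos hij]
    · rw [if_neg hij]; positivity
  have h1 : (if i0 = j0 then (0:ℝ) else 1 / dist (x i0) (x j0) ^ s)
      ≤ ∑ j, if i0 = j then (0:ℝ) else 1 / dist (x i0) (x j) ^ s :=
    Finset.single_le_sum (fun j _ => hterm i0 j) (Finset.mem_univ j0)
  have h2 : (∑ j, if i0 = j then (0:ℝ) else 1 / dist (x i0) (x j) ^ s)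
      ≤ rieszEnergy s (fun _ _ => (1:ℝ)) x :=
    Finset.single_le_sum (fun i _ => Finset.sum_nonneg fun j _ => hterm i j)
      (Finset.mem_univ i0)
  rw [if_neg h] at h1
  exact h1.trans h2

lemma energy_ub {N : ℕ} (hN : 2 ≤ N) {s : ℝ} (hs : 0 ≤ s) {y : Fin N → A}
    (hy : Function.Injective y) :
    rieszEnergy s (fun _ _ => (1:ℝ)) y ≤ (N:ℝ)^2 * (1 / sepDist y ^ s) := by
  have hb := sepDist_pos hN hy
  have hbs : 0 < sepDist y ^ s := Real.rpow_pos_of_pos hb s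
  have hterm : ∀ i j : Fin N, (if i = j then (0:ℝ) else 1 / dist (y i) (y j) ^ s)
      ≤ 1 / sepDist y ^ s := by
    intro i j
    by_cases hij : i = j
    · rw [if_pos hij]; positivity
    · rw [if_neg hij]
      exact one_div_le_one_div_of_le hbs (Real.rpow_le_rpow hb.le (sepDist_le y hij) hs)
  calc rieszEnergy s (fun _ _ => (1:ℝ)) y
      ≤ ∑ _i : Fin N, ∑ _j : Fin N, 1 / sepDist y ^ s :=
        Finset.sum_le_sum fun i _ => Finset.sum_le_sum fun j _ => hterm i j
    _ = (N:ℝ)^2 * (1 / sepDist y ^ s) := by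
        simp [Finset.sum_const, Finset.card_univ, nsmul_eq_mul]
        ring

lemma energy_exists_inj (A : Type*) [MetricSpace A] [Infinite A] (N : ℕ) :
    ∃ y : Fin N → A, Function.Injective y := by
  let e := Infinite.natEmbedding A
  exact ⟨fun i => e i, fun a b h => Fin.val_injective (e.injective h)⟩

/-- any cluster point (as `s → ∞`, in the product topology on `A^N`)
of minimal Riesz `s`-energy configurations is an `N`-point best-packing configuration. -/
theorem stmt_14 {A : Type*} [MetricSpace A] [CompactSpace A] [Infinite A]
    (N : ℕ) (hN : 2 ≤ N) (ω : ℝ → Fin N → A)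
    (hω : ∀ s : ℝ, 0 < s → IsEnergyMinimizer s (fun _ _ => (1 : ℝ)) Set.univ (ω s))
    (ν : Fin N → A) (sj : ℕ → ℝ) (hsj0 : ∀ j, 0 < sj j)
    (hsj : Tendsto sj atTop atTop)
    (hconv : Tendsto (fun j => ω (sj j)) atTop (nhds ν)) :
    sepDist ν = bestPackingDist (Set.univ : Set A) N := by
  have hN0 : (0:ℝ) < (N:ℝ) := by exact_mod_cast (by omega : 0 < N)
  have hN2pos : (0:ℝ) < (N:ℝ)^2 := by positivity
  have key : ∀ y : Fin N → A, Function.Injective y → sepDist y ≤ sepDist ν := by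
    intro y hy
    have hb : 0 < sepDist y := sepDist_pos hN hy
    have hstep : ∀ s : ℝ, 0 < s →
        sepDist y * ((N:ℝ)^2) ^ (-(1/s)) ≤ sepDist (ω s) := by
      intro s hs
      obtain ⟨hinj, -, hmin⟩ := hω s hs
      have ha : 0 < sepDist (ω s) := sepDist_pos hN hinj
      obtain ⟨i0, j0, hij, hrepr⟩ := sepDist_mem hN (ω s)
      have h1 : 1 / sepDist (ω s) ^ s ≤ rieszEnergy s (fun _ _ => (1:ℝ)) (ω s) := by
        rw [hrepr]; exact energy_lb s (ω s) hij
      have h2 : rieszEnergy s (fun _ _ => (1:ℝ)) (ω s) ≤ (N:ℝ)^2 * (1 / sepDist y ^ s) :=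
        (hmin y hy (fun _ => trivial)).trans (energy_ub hN hs.le hy)
      have h3 : 1 / sepDist (ω s) ^ s ≤ (N:ℝ)^2 * (1 / sepDist y ^ s) := h1.trans h2
      have has : 0 < sepDist (ω s) ^ s := Real.rpow_pos_of_pos ha s
      have hbs : 0 < sepDist y ^ s := Real.rpow_pos_of_pos hb s
      rw [mul_one_div, div_le_div_iff₀ has hbs] at h3
      have h4 : sepDist y ^ s / (N:ℝ)^2 ≤ sepDist (ω s) ^ s := by
        rw [div_le_iff₀ hN2pos]; linarith
      have hxs : (-(1/s)) * s = -1 := by field_simp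
      have h5 : (sepDist y * ((N:ℝ)^2) ^ (-(1/s))) ^ s = sepDist y ^ s / (N:ℝ)^2 := by
        rw [Real.mul_rpow hb.le (Real.rpow_nonneg hN2pos.le _),
          ← Real.rpow_mul hN2pos.le, hxs, Real.rpow_neg_one, div_eq_mul_inv]
      rw [← Real.rpow_le_rpow_iff (by positivity) ha.le hs, h5]
      exact h4
    have hlim : Tendsto (fun j => sepDist y * ((N:ℝ)^2) ^ (-(1 / sj j))) atTop
        (nhds (sepDist y)) := by
      have h0 : Tendsto (fun j => -(1 / sj j)) atTop (nhds 0) := by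
        have := hsj.inv_tendsto_atTop
        simpa [one_div] using this.neg
      have hc : Tendsto (fun j => ((N:ℝ)^2) ^ (-(1 / sj j))) atTop (nhds 1) := by
        have := (Real.continuousAt_const_rpow (a := (N:ℝ)^2) (b := 0)
          hN2pos.ne').tendsto.comp h0
        simpa [Function.comp_def] using this
      simpa using hc.const_mul (sepDist y)
    refine le_sepDist hN ν ?_
    intro i k hik
    have hdist : Tendsto (fun j => dist (ω (sj j) i) (ω (sj j) k)) atTop
        (nhds (dist (ν i) (ν k))) :=
      (tendsto_pi_nhds.mp hconv i).dist (tendsto_pi_nhds.mp hconv k)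
    refine le_of_tendsto_of_tendsto' hlim hdist fun j => ?_
    exact (hstep (sj j) (hsj0 j)).trans (sepDist_le (ω (sj j)) hik)
  obtain ⟨y0, hy0⟩ := energy_exists_inj A N
  have hνpos : 0 < sepDist ν := lt_of_lt_of_le (sepDist_pos hN hy0) (key _ hy0)
  have hνinj : Function.Injective ν := by
    intro i j h
    by_contra hij
    have h1 := sepDist_le ν hij
    rw [h, dist_self] at h1
    linarith
  have hbdd : BddAbove {d : ℝ | ∃ x : Fin N → A, Function.Injective x ∧
      (∀ i, x i ∈ (Set.univ : Set A)) ∧ d = sepDist x} := by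
    refine ⟨diam (Set.univ : Set A), ?_⟩
    rintro d ⟨x, hx, -, rfl⟩
    obtain ⟨i, j, hij, hr⟩ := sepDist_mem hN x
    rw [hr]
    exact dist_le_diam_of_mem isCompact_univ.isBounded trivial trivial
  unfold bestPackingDist
  refine le_antisymm (le_csSup hbdd ⟨ν, hνinj, fun _ => trivial, rfl⟩) ?_
  exact csSup_le ⟨sepDist ν, ν, hνinj, fun _ => trivial, rfl⟩
    (by rintro d ⟨x, hx, -, rfl⟩; exact key x hx)
end
end
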